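/- arXiv:1110.4697 — 4 statements merged into one kernel-verified Lean document; each statement's English description precedes it below -/
import Mathlib

section
/- Let S ⊂ {0,1}^N be a finite monotone set of schedules and let D ∈ ℝ_+^N satisfy ρ(D) ≥ N+1, where ρ(D) is the optimal value of the static planning problem for D. Then there exists a schedule σ* ∈ S with σ* ≤ D componentwise and ρ(D − σ*) ≤ ρ(D) − 1. -/
/-- The load `ρ(x)` induced by a nonnegative vector `x`: the infimum of `∑ α_σ` over
nonnegative coefficients `α` with `x ≤ ∑ α_σ σ` componentwise. -/
noncomputable def schedRho (N : ℕ) (S : Finset (Fin N → ℝ)) (x : Fin N → ℝ) : ℝ :=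
  sInf {c : ℝ | ∃ α : (Fin N → ℝ) → ℝ, (∀ σ, 0 ≤ α σ) ∧
    (∀ i, x i ≤ ∑ σ ∈ S, α σ * σ i) ∧ c = ∑ σ ∈ S, α σ}

private lemma sched_bddBelow (N : ℕ) (S : Finset (Fin N → ℝ)) (x : Fin N → ℝ) :
    BddBelow {c : ℝ | ∃ α : (Fin N → ℝ) → ℝ, (∀ σ, 0 ≤ α σ) ∧
      (∀ i, x i ≤ ∑ σ ∈ S, α σ * σ i) ∧ c = ∑ σ ∈ S, α σ} := by
  refine ⟨0, ?_⟩
  rintro c ⟨α, hα, -, rfl⟩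
  exact Finset.sum_nonneg fun σ _ => hα σ

/-- Zeroing one coordinate keeps you in the convex hull, assuming monotonicity. -/
private lemma update_mem_convexHull (N : ℕ) (S : Finset (Fin N → ℝ))
    (hS01 : ∀ σ ∈ S, ∀ i, σ i = 0 ∨ σ i = 1)
    (hmono : ∀ σ ∈ S, ∀ σ' : Fin N → ℝ,
      (∀ i, σ' i = 0 ∨ σ' i = 1) → (∀ i, σ' i ≤ σ i) → σ' ∈ S)
    {z : Fin N → ℝ} (hz : z ∈ convexHull ℝ (↑S : Set (Fin N → ℝ))) (i : Fin N) {c : ℝ}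
    (hc0 : 0 ≤ c) (hcz : c ≤ z i) :
    Function.update z i c ∈ convexHull ℝ (↑S : Set (Fin N → ℝ)) := by
  have hzmem := hz
  rw [Finset.convexHull_eq] at hzmem
  obtain ⟨w, hw0, hw1, hwz⟩ := hzmem
  rw [Finset.centerMass_eq_of_sum_1 _ _ hw1] at hwz
  have hz_eq : ∀ j, z j = ∑ σ ∈ S, w σ * σ j := by
    intro j
    rw [← hwz]
    simp [Finset.sum_apply]
  -- the vector with coordinate i zeroed out
  set z' : Fin N → ℝ := fun j => if j = i then 0 else z j with hz'def
  have hf : ∀ σ ∈ S, Function.update σ i 0 ∈ S := by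
    intro σ hσ
    refine hmono σ hσ _ (fun j => ?_) (fun j => ?_)
    · rcases eq_or_ne j i with rfl | hji
      · simp
      · simpa [Function.update_apply, hji] using hS01 σ hσ j
    · rcases eq_or_ne j i with rfl | hji
      · simp only [Function.update_self]
        rcases hS01 σ hσ j with h | h <;> rw [h] <;> norm_num
      · simp [Function.update_apply, hji]
  have hz'mem : z' ∈ convexHull ℝ (↑S : Set (Fin N → ℝ)) := by
    have hmem := Finset.centerMass_mem_convexHull (s := (↑S : Set (Fin N → ℝ)))
      (z := fun σ => Function.update σ i 0) S
      hw0 (by rw [hw1]; norm_num) (fun σ hσ => Finset.mem_coe.mpr (hf σ hσ))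
    rw [Finset.centerMass_eq_of_sum_1 _ _ hw1] at hmem
    convert hmem using 1
    funext j
    rcases eq_or_ne j i with rfl | hji
    · simp [hz'def, Finset.sum_apply]
    · simp [hz'def, hji, Finset.sum_apply, Function.update_apply, hz_eq j]
  by_cases hzi : z i = 0
  · have hc : c = 0 := le_antisymm (hcz.trans_eq hzi) hc0
    have : Function.update z i c = z' := by
      funext j
      rcases eq_or_ne j i with rfl | hji
      · simp [hc, hz'def]
      · simp [Function.update_apply, hji, hz'def]
    rw [this]; exact hz'mem
  · have hzpos : 0 < z i := lt_of_le_of_ne (hc0.trans hcz) (Ne.symm hzi)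
    set lam : ℝ := c / z i with hlamdef
    have h0lam : 0 ≤ lam := div_nonneg hc0 hzpos.le
    have hlam1 : lam ≤ 1 := (div_le_one hzpos).mpr hcz
    have hcomb := (convex_convexHull ℝ (↑S : Set (Fin N → ℝ))) hz hz'mem h0lam
      (by linarith : (0:ℝ) ≤ 1 - lam) (by ring)
    convert hcomb using 1
    funext j
    rcases eq_or_ne j i with rfl | hji
    · simp only [Function.update_self, Pi.add_apply, Pi.smul_apply, smul_eq_mul, hz'def]
      simp only [if_pos trivial, mul_zero, add_zero]
      rw [hlamdef, div_mul_cancel₀ _ hzi]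
    · simp only [Function.update_apply, if_neg hji, Pi.add_apply, Pi.smul_apply,
        smul_eq_mul, hz'def, if_neg hji]
      ring

/-- Downward closedness of the convex hull of a monotone 0-1 family. -/
private lemma dominated_mem_convexHull (N : ℕ) (S : Finset (Fin N → ℝ))
    (hS01 : ∀ σ ∈ S, ∀ i, σ i = 0 ∨ σ i = 1)
    (hmono : ∀ σ ∈ S, ∀ σ' : Fin N → ℝ,
      (∀ i, σ' i = 0 ∨ σ' i = 1) → (∀ i, σ' i ≤ σ i) → σ' ∈ S)
    {y z : Fin N → ℝ} (hz : z ∈ convexHull ℝ (↑S : Set (Fin N → ℝ)))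
    (hy0 : ∀ i, 0 ≤ y i) (hyz : ∀ i, y i ≤ z i) :
    y ∈ convexHull ℝ (↑S : Set (Fin N → ℝ)) := by
  have main : ∀ (u : Finset (Fin N)) (z : Fin N → ℝ),
      z ∈ convexHull ℝ (↑S : Set (Fin N → ℝ)) → (∀ i, y i ≤ z i) →
      (∀ i ∉ u, y i = z i) → y ∈ convexHull ℝ (↑S : Set (Fin N → ℝ)) := by
    intro u
    induction u using Finset.induction_on with
    | empty =>
      intro z hz _ hoff
      have : y = z := funext fun i => hoff i (Finset.notMem_empty i)
      rwa [this]
    | @insert a s ha ih =>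
      intro z hz hyz hoff
      have hz' := update_mem_convexHull N S hS01 hmono hz a (hy0 a) (hyz a)
      refine ih (Function.update z a (y a)) hz' (fun i => ?_) (fun i hi => ?_)
      · rcases eq_or_ne i a with rfl | hia
        · simp
        · simpa [Function.update_apply, hia] using hyz i
      · rcases eq_or_ne i a with rfl | hia
        · simp
        · rw [Function.update_apply, if_neg hia]
          exact hoff i (by simp [hia, hi])
  exact main Finset.univ z hz hyz (fun i hi => absurd (Finset.mem_univ i) hi)

/-- The approximate version of the main theorem. -/
private lemma key_step (N : ℕ) (S : Finset (Fin N → ℝ))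
    (hS01 : ∀ σ ∈ S, ∀ i, σ i = 0 ∨ σ i = 1)
    (hmono : ∀ σ ∈ S, ∀ σ' : Fin N → ℝ,
      (∀ i, σ' i = 0 ∨ σ' i = 1) → (∀ i, σ' i ≤ σ i) → σ' ∈ S)
    (D : Fin N → ℝ) (hD : ∀ i, 0 ≤ D i)
    (hbig : (N : ℝ) + 1 ≤ schedRho N S D) {ε : ℝ} (hε : 0 < ε) :
    ∃ σ ∈ S, (∀ i, σ i ≤ D i) ∧ schedRho N S (D - σ) ≤ schedRho N S D - 1 + ε := by
  set ρ := schedRho N S D with hρdef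
  set F : Set ℝ := {c : ℝ | ∃ α : (Fin N → ℝ) → ℝ, (∀ σ, 0 ≤ α σ) ∧
    (∀ i, D i ≤ ∑ σ ∈ S, α σ * σ i) ∧ c = ∑ σ ∈ S, α σ} with hFdef
  have hNpos : (0:ℝ) < (N:ℝ) + 1 := by positivity
  have hne : F.Nonempty := by
    by_contra h
    rw [Set.not_nonempty_iff_eq_empty] at h
    have : ρ = 0 := by
      rw [hρdef, schedRho, ← hFdef, h, Real.sInf_empty]
    rw [this] at hbig
    linarith
  obtain ⟨T, hTmem, hTlt⟩ := Real.lt_sInf_add_pos hne hε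
  have hρT : ρ ≤ T := csInf_le (sched_bddBelow N S D) hTmem
  obtain ⟨α, hα0, hαcov, rfl⟩ := hTmem
  set T := ∑ σ ∈ S, α σ with hTdef
  have hsInfρ : sInf F = ρ := rfl
  have hT1 : (N:ℝ) + 1 ≤ T := hbig.trans hρT
  have hTpos : 0 < T := lt_of_lt_of_le hNpos hT1
  -- the normalized covering point
  set z : Fin N → ℝ := fun i => (∑ σ ∈ S, α σ * σ i) / T with hzdef
  have hz : z ∈ convexHull ℝ (↑S : Set (Fin N → ℝ)) := by
    rw [Finset.convexHull_eq]
    refine ⟨fun σ => α σ / T, fun σ _ => div_nonneg (hα0 σ) hTpos.le, ?_, ?_⟩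
    · rw [← Finset.sum_div, div_self hTpos.ne']
    · rw [Finset.centerMass_eq_of_sum_1]
      · funext j
        simp only [hzdef, Finset.sum_apply, Pi.smul_apply, smul_eq_mul, id_eq]
        rw [Finset.sum_div]
        congr 1
        funext σ
        ring
      · rw [← Finset.sum_div, div_self hTpos.ne']
  set y : Fin N → ℝ := fun i => D i / T with hydef
  have hy0 : ∀ i, 0 ≤ y i := fun i => div_nonneg (hD i) hTpos.le
  have hy : y ∈ convexHull ℝ (↑S : Set (Fin N → ℝ)) := by
    refine dominated_mem_convexHull N S hS01 hmono hz hy0 (fun i => ?_)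
    exact div_le_div_of_nonneg_right (hαcov i) hTpos.le
  -- Carathéodory
  rw [convexHull_eq_union] at hy
  simp only [Set.mem_iUnion] at hy
  obtain ⟨t, hts, hai, hyt⟩ := hy
  have htS : t ⊆ S := Finset.coe_subset.mp hts
  have hcard : (t.card : ℝ) ≤ (N:ℝ) + 1 := by
    have h1 : Fintype.card ↥t ≤ Module.finrank ℝ
        (vectorSpan ℝ (Set.range ((↑) : ↥t → (Fin N → ℝ)))) + 1 :=
      hai.card_le_finrank_succ
    have h2 : Module.finrank ℝ
        (vectorSpan ℝ (Set.range ((↑) : ↥t → (Fin N → ℝ)))) ≤ N := by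
      have := Submodule.finrank_le (vectorSpan ℝ (Set.range ((↑) : ↥t → (Fin N → ℝ))))
      rwa [Module.finrank_fin_fun] at this
    have : t.card ≤ N + 1 := by
      rw [← Fintype.card_coe]
      omega
    exact_mod_cast this
  rw [Finset.convexHull_eq] at hyt
  obtain ⟨w, hw0, hw1, hwy⟩ := hyt
  rw [Finset.centerMass_eq_of_sum_1 _ _ hw1] at hwy
  have hy_eq : ∀ i, y i = ∑ σ ∈ t, w σ * σ i := by
    intro i
    rw [← hwy]
    simp [Finset.sum_apply]
  -- a schedule with large weight
  have hex : ∃ σ ∈ t, 1 / ((N:ℝ) + 1) ≤ w σ := by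
    by_contra h
    push_neg at h
    have htne : t.Nonempty := by
      rcases Finset.eq_empty_or_nonempty t with rfl | h'
      · simp at hw1
      · exact h'
    have hlt : ∑ σ ∈ t, w σ < ∑ σ ∈ t, 1 / ((N:ℝ) + 1) :=
      Finset.sum_lt_sum_of_nonempty htne h
    rw [hw1, Finset.sum_const, nsmul_eq_mul] at hlt
    have : (t.card : ℝ) * (1 / ((N:ℝ) + 1)) ≤ 1 := by
      rw [mul_one_div]
      exact (div_le_one hNpos).mpr hcard
    linarith
  obtain ⟨σs, hσt, hwσ⟩ := hex
  have hσS : σs ∈ S := htS hσt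
  have hTw : 1 ≤ T * w σs := by
    have h1 := mul_le_mul hT1 hwσ (by positivity) hTpos.le
    have h2 : ((N:ℝ) + 1) * (1 / ((N:ℝ) + 1)) = 1 := by field_simp
    linarith
  -- σs ≤ D
  have hwy_ge : ∀ i, σs i = 1 → w σs ≤ y i := by
    intro i hi
    rw [hy_eq i]
    have h' : w σs * σs i ≤ ∑ σ ∈ t, w σ * σ i := Finset.single_le_sum (f := fun σ => w σ * σ i)
      (fun σ hσ => mul_nonneg (hw0 σ hσ) (by rcases hS01 σ (htS hσ) i with h | h <;> rw [h] <;> norm_num))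
      hσt
    rwa [hi, mul_one] at h'
  have hσleD : ∀ i, σs i ≤ D i := by
    intro i
    rcases hS01 σs hσS i with h | h
    · rw [h]; exact hD i
    · rw [h]
      have h1 : w σs ≤ y i := hwy_ge i h
      have h2 : T * w σs ≤ T * y i := mul_le_mul_of_nonneg_left h1 hTpos.le
      have h3 : T * y i = D i := by
        rw [hydef]
        field_simp
      linarith
  refine ⟨σs, hσS, hσleD, ?_⟩
  -- the reduced cover
  set α' : (Fin N → ℝ) → ℝ :=
    fun σ => (if σ ∈ t then T * w σ else 0) - (if σ = σs then 1 else 0) with hα'def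
  have hsum_t : ∀ (g : (Fin N → ℝ) → ℝ),
      ∑ σ ∈ S, (if σ ∈ t then T * w σ else 0) * g σ = T * ∑ σ ∈ t, w σ * g σ := by
    intro g
    rw [Finset.mul_sum, ← Finset.sum_subset htS (fun σ _ hσt' => by rw [if_neg hσt', zero_mul])]
    refine Finset.sum_congr rfl fun σ hσ => ?_
    rw [if_pos hσ]; ring
  have hsum_s : ∀ (g : (Fin N → ℝ) → ℝ),
      ∑ σ ∈ S, (if σ = σs then 1 else 0) * g σ = g σs := by
    intro g
    rw [Finset.sum_eq_single σs]
    · rw [if_pos rfl, one_mul]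
    · intro σ _ hne'; rw [if_neg hne', zero_mul]
    · intro h; exact absurd hσS h
  have hmem' : T - 1 ∈ {c : ℝ | ∃ β : (Fin N → ℝ) → ℝ, (∀ σ, 0 ≤ β σ) ∧
      (∀ i, (D - σs) i ≤ ∑ σ ∈ S, β σ * σ i) ∧ c = ∑ σ ∈ S, β σ} := by
    refine ⟨α', fun σ => ?_, fun i => ?_, ?_⟩
    · simp only [hα'def]
      rcases eq_or_ne σ σs with rfl | hne'
      · rw [if_pos hσt, if_pos rfl]
        linarith
      · rw [if_neg hne', sub_zero]
        split_ifs with h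
        · exact mul_nonneg hTpos.le (hw0 σ h)
        · exact le_refl 0
    · have : ∑ σ ∈ S, α' σ * σ i =
          T * ∑ σ ∈ t, w σ * σ i - σs i := by
        simp only [hα'def, sub_mul]
        rw [Finset.sum_sub_distrib, hsum_t (fun σ => σ i), hsum_s (fun σ => σ i)]
      rw [this, ← hy_eq i]
      have h3 : T * y i = D i := by rw [hydef]; field_simp
      rw [h3]
      simp [Pi.sub_apply]
    · have h1 : ∑ σ ∈ S, α' σ =
          T * ∑ σ ∈ t, w σ - 1 := by
        have e1 := hsum_t (fun _ => (1:ℝ))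
        have e2 := hsum_s (fun _ => (1:ℝ))
        simp only [mul_one] at e1 e2
        simp only [hα'def]
        rw [Finset.sum_sub_distrib, e1, e2]
      rw [h1, hw1, mul_one]
  have hfinal : schedRho N S (D - σs) ≤ T - 1 :=
    csInf_le (sched_bddBelow N S (D - σs)) hmem'
  have : T < ρ + ε := by rwa [hsInfρ] at hTlt
  linarith

theorem stmt3 (N : ℕ) (S : Finset (Fin N → ℝ))
    (hS01 : ∀ σ ∈ S, ∀ i, σ i = 0 ∨ σ i = 1)
    (hmono : ∀ σ ∈ S, ∀ σ' : Fin N → ℝ,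
      (∀ i, σ' i = 0 ∨ σ' i = 1) → (∀ i, σ' i ≤ σ i) → σ' ∈ S)
    (hunit : ∀ i : Fin N, (fun k => if k = i then (1 : ℝ) else 0) ∈ S)
    (D : Fin N → ℝ) (hD : ∀ i, 0 ≤ D i)
    (hbig : (N : ℝ) + 1 ≤ schedRho N S D) :
    ∃ σ ∈ S, (∀ i, σ i ≤ D i) ∧ schedRho N S (D - σ) ≤ schedRho N S D - 1 := by
  have key : ∀ n : ℕ, ∃ σ, (σ ∈ S ∧ (∀ i, σ i ≤ D i)) ∧
      schedRho N S (D - σ) ≤ schedRho N S D - 1 + 1 / ((n:ℝ) + 1) := by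
    intro n
    obtain ⟨σ, h1, h2, h3⟩ := key_step N S hS01 hmono D hD hbig
      (ε := 1 / ((n:ℝ) + 1)) (by positivity)
    exact ⟨σ, ⟨h1, h2⟩, h3⟩
  choose f hf hfρ using key
  set g : ℕ → {σ // σ ∈ S} := fun n => ⟨f n, (hf n).1⟩ with hgdef
  obtain ⟨σ0, hσ0⟩ := Finite.exists_infinite_fiber g
  have hinf : (g ⁻¹' {σ0}).Infinite := Set.infinite_coe_iff.mp hσ0
  obtain ⟨n0, hn0⟩ := hinf.nonempty
  have hgn0 : g n0 = σ0 := hn0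
  have hfn0 : f n0 = (σ0 : Fin N → ℝ) := congrArg Subtype.val hgn0
  refine ⟨f n0, (hf n0).1, (hf n0).2, ?_⟩
  refine le_of_forall_pos_le_add (fun ε hε => ?_)
  obtain ⟨n, hn⟩ := Archimedean.arch 1 hε
  obtain ⟨m, hm, hmn⟩ := hinf.exists_gt n
  have hfm : f m = f n0 := by
    have hgm : g m = σ0 := hm
    rw [hfn0]
    exact congrArg Subtype.val hgm
  have h1 : schedRho N S (D - f n0) ≤ schedRho N S D - 1 + 1 / ((m:ℝ) + 1) := by
    rw [← hfm]; exact hfρ m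
  have h2 : 1 / ((m:ℝ) + 1) ≤ ε := by
    have hn' : (1:ℝ) ≤ (n:ℝ) * ε := by
      have := hn
      simpa [nsmul_eq_mul] using hn
    have hm1 : (n:ℝ) + 1 ≤ (m:ℝ) + 1 := by
      have : (n:ℝ) ≤ (m:ℝ) := by exact_mod_cast hmn.le
      linarith
    rw [div_le_iff₀ (by positivity : (0:ℝ) < (m:ℝ) + 1)]
    calc (1:ℝ) ≤ (n:ℝ) * ε := hn'
      _ ≤ ((m:ℝ) + 1) * ε := by
          apply mul_le_mul_of_nonneg_right _ hε.le
          linarith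
      _ = ε * ((m:ℝ) + 1) := by ring
  linarith
end

section
/- Consider the discrete-time recursion D(τ+1) = (D(τ) − dB(τ)) + dL(τ) in ℝ_+^N, where D(0) = 0, each increment dL(τ) satisfies ρ(dL(τ)) ≤ 1, and dB(τ) ∈ S is chosen by the following rule: if D(τ) admits a nonnegative decomposition Σ_σ α_σ σ = D(τ) with Σ_σ α_σ = ρ(D(τ)) and α_{σ'} ≥ 1 for some σ' ∈ S, set dB(τ) = σ'; otherwise choose dB(τ) ∈ S maximizing Σ_i σ_i subject to σ ≤ D(τ). Then ρ(D(τ)) ≤ N + 2 for all τ ≥ 0, and consequently Σ_i D_i(τ) ≤ K(N+2) where K = max_{σ∈S} Σ_i σ_i. -/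
namespace SchedAux

def RhoSet (N : ℕ) (S : Finset (Fin N → ℝ)) (x : Fin N → ℝ) : Set ℝ :=
  {c : ℝ | ∃ α : (Fin N → ℝ) → ℝ, (∀ σ, 0 ≤ α σ) ∧
    (∀ i, x i ≤ ∑ σ ∈ S, α σ * σ i) ∧ c = ∑ σ ∈ S, α σ}

lemma rho_def (N : ℕ) (S : Finset (Fin N → ℝ)) (x : Fin N → ℝ) :
    schedRho N S x = sInf (RhoSet N S x) := rfl

variable {N : ℕ} {S : Finset (Fin N → ℝ)}

lemma rhoSet_bddBelow (x : Fin N → ℝ) : BddBelow (RhoSet N S x) := by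
  refine ⟨0, fun c hc => ?_⟩
  obtain ⟨α, hα, _, rfl⟩ := hc
  exact Finset.sum_nonneg fun σ _ => hα σ

lemma rhoSet_nonempty (hunit : ∀ i : Fin N, (fun k => if k = i then (1 : ℝ) else 0) ∈ S)
    (x : Fin N → ℝ) : (RhoSet N S x).Nonempty := by
  classical
  set e : Fin N → (Fin N → ℝ) := fun i => (fun k => if k = i then (1 : ℝ) else 0) with he
  refine ⟨∑ i, max (x i) 0, fun σ => ∑ i, if σ = e i then max (x i) 0 else 0, ?_, ?_, ?_⟩
  · intro σ
    exact Finset.sum_nonneg fun i _ => by positivity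
  · intro j
    have : ∀ i, ∑ σ ∈ S, (if σ = e i then max (x i) 0 else 0) * σ j
        = max (x i) 0 * e i j := by
      intro i
      rw [Finset.sum_eq_single (e i)]
      · simp
      · intro b _ hb; simp [hb]
      · intro h; exact absurd (hunit i) h
    calc x j ≤ max (x j) 0 := le_max_left _ _
      _ = ∑ i, max (x i) 0 * e i j := by
          rw [Finset.sum_eq_single j]
          · simp [he]
          · intro b _ hb; simp [he, if_neg (Ne.symm hb)]
          · simp
      _ = ∑ i, ∑ σ ∈ S, (if σ = e i then max (x i) 0 else 0) * σ j := by
          simp_rw [this]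
      _ = ∑ σ ∈ S, (∑ i, if σ = e i then max (x i) 0 else 0) * σ j := by
          rw [Finset.sum_comm]
          simp_rw [Finset.sum_mul]
  · rw [Finset.sum_comm]
    congr 1
    ext i
    rw [Finset.sum_eq_single (e i)]
    · simp
    · intro b _ hb; simp [hb]
    · intro h; exact absurd (hunit i) h

lemma rho_le_of_mem {c : ℝ} {x : Fin N → ℝ} (hc : c ∈ RhoSet N S x) :
    schedRho N S x ≤ c := csInf_le (rhoSet_bddBelow x) hc

lemma rho_nonneg (hunit : ∀ i : Fin N, (fun k => if k = i then (1 : ℝ) else 0) ∈ S)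
    (x : Fin N → ℝ) : 0 ≤ schedRho N S x :=
  le_csInf (rhoSet_nonempty hunit x) fun c hc => by
    obtain ⟨α, hα, _, rfl⟩ := hc
    exact Finset.sum_nonneg fun σ _ => hα σ

lemma rho_mono (hunit : ∀ i : Fin N, (fun k => if k = i then (1 : ℝ) else 0) ∈ S)
    {x y : Fin N → ℝ} (hxy : ∀ i, x i ≤ y i) : schedRho N S x ≤ schedRho N S y := by
  apply csInf_le_csInf (rhoSet_bddBelow x) (rhoSet_nonempty hunit y)
  rintro c ⟨α, hα, hge, rfl⟩
  exact ⟨α, hα, fun i => (hxy i).trans (hge i), rfl⟩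

lemma rho_subadd (hunit : ∀ i : Fin N, (fun k => if k = i then (1 : ℝ) else 0) ∈ S)
    (x y : Fin N → ℝ) : schedRho N S (x + y) ≤ schedRho N S x + schedRho N S y := by
  have key : ∀ c ∈ RhoSet N S x, ∀ d ∈ RhoSet N S y, schedRho N S (x + y) ≤ c + d := by
    rintro c ⟨α, hα, hgeα, rfl⟩ d ⟨β, hβ, hgeβ, rfl⟩
    apply rho_le_of_mem
    refine ⟨fun σ => α σ + β σ, fun σ => add_nonneg (hα σ) (hβ σ), fun i => ?_, ?_⟩
    · simp only [Pi.add_apply, add_mul, Finset.sum_add_distrib]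
      exact add_le_add (hgeα i) (hgeβ i)
    · rw [Finset.sum_add_distrib]
  have h1 : ∀ d ∈ RhoSet N S y, schedRho N S (x + y) - d ≤ schedRho N S x := by
    intro d hd
    refine le_csInf (rhoSet_nonempty hunit x) fun c hc => ?_
    linarith [key c hc d hd]
  rw [← sub_le_iff_le_add']
  refine le_csInf (rhoSet_nonempty hunit y) fun d hd => ?_
  linarith [h1 d hd]


lemma sum_ite_single {c : Fin N → ℝ} (hc : c ∈ S) (f : (Fin N → ℝ) → ℝ) :
    ∑ σ ∈ S, (if σ = c then f σ else 0) = f c := by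
  rw [Finset.sum_ite_eq' S c f, if_pos hc]

/-- Fix coordinate `i`: lower the `i`-th sum to exactly `t` while preserving
all other coordinate sums and the total weight. -/
lemma fixCoord (hS01 : ∀ σ ∈ S, ∀ i, σ i = 0 ∨ σ i = 1)
    (hmono : ∀ σ ∈ S, ∀ σ' : Fin N → ℝ,
      (∀ i, σ' i = 0 ∨ σ' i = 1) → (∀ i, σ' i ≤ σ i) → σ' ∈ S)
    (i : Fin N) (t : ℝ) (ht : 0 ≤ t) :
    ∀ n : ℕ, ∀ α : (Fin N → ℝ) → ℝ,
      (S.filter fun σ => σ i = 1 ∧ α σ ≠ 0).card ≤ n →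
      (∀ σ, 0 ≤ α σ) → t ≤ ∑ σ ∈ S, α σ * σ i →
      ∃ α' : (Fin N → ℝ) → ℝ, (∀ σ, 0 ≤ α' σ) ∧ (∑ σ ∈ S, α' σ * σ i = t) ∧
        (∀ j, j ≠ i → ∑ σ ∈ S, α' σ * σ j = ∑ σ ∈ S, α σ * σ j) ∧
        ∑ σ ∈ S, α' σ = ∑ σ ∈ S, α σ := by
  classical
  intro n
  induction n with
  | zero =>
    intro α hcard hα hge
    refine ⟨α, hα, ?_, fun j _ => rfl, rfl⟩
    have hempty : (S.filter fun σ => σ i = 1 ∧ α σ ≠ 0) = ∅ :=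
      Finset.card_eq_zero.mp (Nat.le_zero.mp hcard)
    have hzero : ∑ σ ∈ S, α σ * σ i = 0 := by
      apply Finset.sum_eq_zero
      intro σ hσ
      by_cases h1 : σ i = 1
      · by_cases h2 : α σ = 0
        · simp [h2]
        · have hmem : σ ∈ S.filter (fun σ => σ i = 1 ∧ α σ ≠ 0) :=
            Finset.mem_filter.mpr ⟨hσ, h1, h2⟩
          rw [hempty] at hmem
          exact absurd hmem (Finset.notMem_empty σ)
      · rcases hS01 σ hσ i with h | h
        · simp [h]
        · exact absurd h h1
    rw [hzero]
    linarith [hge.trans_eq hzero]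
  | succ n ih =>
    intro α hcard hα hge
    by_cases heq : ∑ σ ∈ S, α σ * σ i = t
    · exact ⟨α, hα, heq, fun j _ => rfl, rfl⟩
    have hlt : t < ∑ σ ∈ S, α σ * σ i := lt_of_le_of_ne hge (Ne.symm heq)
    -- find σ0 with σ0 i = 1 and α σ0 > 0
    have hexists : ∃ σ0 ∈ S, σ0 i = 1 ∧ 0 < α σ0 := by
      by_contra hno
      push_neg at hno
      have : ∑ σ ∈ S, α σ * σ i ≤ 0 := by
        apply Finset.sum_nonpos
        intro σ hσ
        rcases hS01 σ hσ i with h | h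
        · simp [h]
        · have := hno σ hσ h
          simp [h, le_antisymm this (hα σ)]
      linarith
    obtain ⟨σ0, hσ0S, hσ0i, hσ0pos⟩ := hexists
    set σ1 : Fin N → ℝ := Function.update σ0 i 0 with hσ1
    have hσ1S : σ1 ∈ S := by
      apply hmono σ0 hσ0S
      · intro j
        by_cases hj : j = i
        · subst hj; left; simp [hσ1]
        · simpa [hσ1, Function.update_of_ne hj] using hS01 σ0 hσ0S j
      · intro j
        by_cases hj : j = i
        · subst hj; simp [hσ1, hσ0i]
        · simp [hσ1, Function.update_of_ne hj]
    have hσ01 : σ1 ≠ σ0 := by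
      intro h
      have : σ1 i = σ0 i := by rw [h]
      simp [hσ1, hσ0i] at this
    set s : ℝ := ∑ σ ∈ S, α σ * σ i with hs
    set δ : ℝ := min (α σ0) (s - t) with hδ
    have hδpos : 0 < δ := lt_min hσ0pos (by linarith)
    have hδle1 : δ ≤ α σ0 := min_le_left _ _
    have hδle2 : δ ≤ s - t := min_le_right _ _
    set α' : (Fin N → ℝ) → ℝ := fun σ =>
      α σ + δ * ((if σ = σ1 then 1 else 0) - (if σ = σ0 then 1 else 0)) with hα'
    have hα'nn : ∀ σ, 0 ≤ α' σ := by
      intro σ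
      show 0 ≤ α σ + δ * ((if σ = σ1 then 1 else 0) - if σ = σ0 then 1 else 0)
      by_cases h1 : σ = σ1 <;> by_cases h0 : σ = σ0
      · exact absurd (h1.symm.trans h0) hσ01
      · rw [if_pos h1, if_neg h0]; have := hα σ; linarith
      · rw [if_neg h1, if_pos h0]; rw [h0]; linarith
      · rw [if_neg h1, if_neg h0]; have := hα σ; linarith
    have hsum : ∀ f : (Fin N → ℝ) → ℝ,
        ∑ σ ∈ S, α' σ * f σ = (∑ σ ∈ S, α σ * f σ) + δ * (f σ1 - f σ0) := by
      intro f
      have : ∀ σ ∈ S, α' σ * f σ =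
          α σ * f σ + ((if σ = σ1 then δ * f σ else 0) - (if σ = σ0 then δ * f σ else 0)) := by
        intro σ _
        show (α σ + δ * ((if σ = σ1 then 1 else 0) - if σ = σ0 then 1 else 0)) * f σ = _
        split_ifs <;> ring
      rw [Finset.sum_congr rfl this, Finset.sum_add_distrib, Finset.sum_sub_distrib,
        sum_ite_single hσ1S (fun σ => δ * f σ), sum_ite_single hσ0S (fun σ => δ * f σ)]
      ring
    have hsumi : ∑ σ ∈ S, α' σ * σ i = s - δ := by
      have h := hsum (fun σ => σ i)
      simp only [hσ1, Function.update_self] at h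
      rw [h, hσ0i, ← hs]; ring
    have hsumj : ∀ j, j ≠ i → ∑ σ ∈ S, α' σ * σ j = ∑ σ ∈ S, α σ * σ j := by
      intro j hj
      rw [hsum (fun σ => σ j)]
      simp [hσ1, Function.update_of_ne hj]
    have hsumtot : ∑ σ ∈ S, α' σ = ∑ σ ∈ S, α σ := by
      have := hsum (fun _ => 1)
      simpa using this
    by_cases hcase : α σ0 ≤ s - t
    · -- δ = α σ0 : weight at σ0 is exhausted, recurse
      have hδ0 : δ = α σ0 := min_eq_left hcase
      have hα'σ0 : α' σ0 = 0 := by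
        show α σ0 + δ * ((if σ0 = σ1 then 1 else 0) - if σ0 = σ0 then 1 else 0) = 0
        rw [if_neg (fun h : σ0 = σ1 => hσ01 h.symm), if_pos rfl]
        linarith
      have hsub : (S.filter fun σ => σ i = 1 ∧ α' σ ≠ 0) ⊆
          (S.filter fun σ => σ i = 1 ∧ α σ ≠ 0).erase σ0 := by
        intro σ hσ
        rw [Finset.mem_filter] at hσ
        obtain ⟨hσS, hσi, hσne⟩ := hσ
        have hne0 : σ ≠ σ0 := fun h => hσne (h ▸ hα'σ0)
        have hne1 : σ ≠ σ1 := fun h => by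
          rw [h] at hσi; simp [hσ1] at hσi
        refine Finset.mem_erase.mpr ⟨hne0, Finset.mem_filter.mpr ⟨hσS, hσi, ?_⟩⟩
        intro h
        apply hσne
        show α σ + δ * ((if σ = σ1 then 1 else 0) - if σ = σ0 then 1 else 0) = 0
        rw [if_neg hne1, if_neg hne0, h]
        ring
      have hcard' : (S.filter fun σ => σ i = 1 ∧ α' σ ≠ 0).card ≤ n := by
        have h1 : σ0 ∈ (S.filter fun σ => σ i = 1 ∧ α σ ≠ 0) :=
          Finset.mem_filter.mpr ⟨hσ0S, hσ0i, ne_of_gt hσ0pos⟩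
        calc (S.filter fun σ => σ i = 1 ∧ α' σ ≠ 0).card
            ≤ ((S.filter fun σ => σ i = 1 ∧ α σ ≠ 0).erase σ0).card :=
              Finset.card_le_card hsub
          _ = (S.filter fun σ => σ i = 1 ∧ α σ ≠ 0).card - 1 :=
              Finset.card_erase_of_mem h1
          _ ≤ n := by simpa using Nat.sub_le_sub_right hcard 1
      have hge' : t ≤ ∑ σ ∈ S, α' σ * σ i := by rw [hsumi]; linarith
      obtain ⟨α'', h1, h2, h3, h4⟩ := ih α' hcard' hα'nn hge'
      exact ⟨α'', h1, h2, fun j hj => (h3 j hj).trans (hsumj j hj),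
        h4.trans hsumtot⟩
    · -- δ = s - t : equality reached
      push_neg at hcase
      have hδ0 : δ = s - t := min_eq_right (le_of_lt hcase)
      refine ⟨α', hα'nn, ?_, hsumj, hsumtot⟩
      rw [hsumi, hδ0]; ring

/-- Convert an inequality decomposition of a nonnegative vector into an equality
decomposition with the same total weight. -/
lemma toEquality (hS01 : ∀ σ ∈ S, ∀ i, σ i = 0 ∨ σ i = 1)
    (hmono : ∀ σ ∈ S, ∀ σ' : Fin N → ℝ,
      (∀ i, σ' i = 0 ∨ σ' i = 1) → (∀ i, σ' i ≤ σ i) → σ' ∈ S)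
    {x : Fin N → ℝ} (hx : ∀ i, 0 ≤ x i) (α : (Fin N → ℝ) → ℝ)
    (hα : ∀ σ, 0 ≤ α σ) (hge : ∀ i, x i ≤ ∑ σ ∈ S, α σ * σ i) :
    ∃ α' : (Fin N → ℝ) → ℝ, (∀ σ, 0 ≤ α' σ) ∧ (∀ i, ∑ σ ∈ S, α' σ * σ i = x i) ∧
      ∑ σ ∈ S, α' σ = ∑ σ ∈ S, α σ := by
  classical
  suffices h : ∀ T : Finset (Fin N), ∃ α' : (Fin N → ℝ) → ℝ, (∀ σ, 0 ≤ α' σ) ∧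
      (∀ i, x i ≤ ∑ σ ∈ S, α' σ * σ i) ∧ (∀ i ∈ T, ∑ σ ∈ S, α' σ * σ i = x i) ∧
      ∑ σ ∈ S, α' σ = ∑ σ ∈ S, α σ by
    obtain ⟨α', h1, _, h3, h4⟩ := h Finset.univ
    exact ⟨α', h1, fun i => h3 i (Finset.mem_univ i), h4⟩
  intro T
  induction T using Finset.induction_on with
  | empty => exact ⟨α, hα, hge, fun i hi => absurd hi (Finset.notMem_empty i), rfl⟩
  | @insert i T hnotmem ih =>
    obtain ⟨β, hβ, hβge, hβeq, hβtot⟩ := ih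
    obtain ⟨β', h1, h2, h3, h4⟩ := fixCoord hS01 hmono i (x i) (hx i)
      (S.filter fun σ => σ i = 1 ∧ β σ ≠ 0).card β le_rfl hβ (hβge i)
    refine ⟨β', h1, ?_, ?_, h4.trans hβtot⟩
    · intro j
      by_cases hj : j = i
      · subst hj; exact h2.ge
      · rw [h3 j hj]; exact hβge j
    · intro j hj
      rcases Finset.mem_insert.mp hj with hj | hj
      · subst hj; exact h2
      · have hji : j ≠ i := fun h => hnotmem (h ▸ hj)
        rw [h3 j hji]; exact hβeq j hj

lemma exists_min_feasible (x : Fin N → ℝ) (c0 : ℝ) (α0 : (Fin N → ℝ) → ℝ) (hα0 : ∀ σ, 0 ≤ α0 σ)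
    (hge0 : ∀ i, x i ≤ ∑ σ ∈ S, α0 σ * σ i) (hc0 : c0 = ∑ σ ∈ S, α0 σ) :
    ∃ α : (Fin N → ℝ) → ℝ, (∀ σ, 0 ≤ α σ) ∧ (∀ i, x i ≤ ∑ σ ∈ S, α σ * σ i) ∧
      (∑ σ ∈ S, α σ) ≤ c0 ∧
      ∀ β : (Fin N → ℝ) → ℝ, (∀ σ, 0 ≤ β σ) → (∀ i, x i ≤ ∑ σ ∈ S, β σ * σ i) →
        ∑ σ ∈ S, α σ ≤ ∑ σ ∈ S, β σ := by
  classical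
  set K : Set ({σ // σ ∈ S} → ℝ) :=
    {β | ∀ σ, 0 ≤ β σ} ∩ ({β | ∀ i, x i ≤ ∑ σ : {σ // σ ∈ S}, β σ * σ.val i} ∩
      {β | ∑ σ : {σ // σ ∈ S}, β σ ≤ c0}) with hK
  have hKne : K.Nonempty := by
    refine ⟨fun σ => α0 σ.val, fun σ => hα0 σ.val, fun i => ?_, ?_⟩
    · show x i ≤ ∑ σ : {σ // σ ∈ S}, α0 σ.val * σ.val i
      rw [Finset.sum_coe_sort S (fun σ => α0 σ * σ i)]; exact hge0 i
    · show ∑ σ : {σ // σ ∈ S}, α0 σ.val ≤ c0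
      rw [Finset.sum_coe_sort S (fun σ => α0 σ)]; exact hc0.ge
  have hKclosed : IsClosed K := by
    refine IsClosed.inter ?_ (IsClosed.inter ?_ ?_)
    · rw [Set.setOf_forall]
      exact isClosed_iInter fun σ => isClosed_le continuous_const (continuous_apply σ)
    · rw [Set.setOf_forall]
      refine isClosed_iInter fun i => isClosed_le continuous_const ?_
      exact continuous_finset_sum _ fun σ _ => (continuous_apply σ).mul continuous_const
    · exact isClosed_le (continuous_finset_sum _ fun σ _ => continuous_apply σ)
        continuous_const
  have hKcompact : IsCompact K := by
    have hbox : IsCompact (Set.Icc (0 : {σ // σ ∈ S} → ℝ) (fun _ => c0)) := isCompact_Icc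
    refine hbox.of_isClosed_subset hKclosed ?_
    rintro β ⟨h1, _, h3⟩
    refine ⟨fun σ => h1 σ, fun σ => ?_⟩
    calc β σ ≤ ∑ σ' : {σ // σ ∈ S}, β σ' :=
          Finset.single_le_sum (fun σ' _ => h1 σ') (Finset.mem_univ σ)
      _ ≤ c0 := h3
  obtain ⟨βm, hβmK, hβmin⟩ := hKcompact.exists_isMinOn hKne
    ((continuous_finset_sum _ fun σ _ => continuous_apply σ).continuousOn
      (f := fun β : {σ // σ ∈ S} → ℝ => ∑ σ : {σ // σ ∈ S}, β σ))
  obtain ⟨hm1, hm2, hm3⟩ := hβmK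
  set αm : (Fin N → ℝ) → ℝ := fun σ => if h : σ ∈ S then βm ⟨σ, h⟩ else 0 with hαm
  have hsum : ∀ f : (Fin N → ℝ) → Fin N → ℝ → ℝ, True := fun _ => trivial
  have key : ∀ g : (Fin N → ℝ) → ℝ → ℝ, ∑ σ ∈ S, g σ (αm σ) = ∑ σ : {σ // σ ∈ S}, g σ.val (βm σ) := by
    intro g
    rw [← Finset.sum_coe_sort S (fun σ => g σ (αm σ))]
    exact Finset.sum_congr rfl fun σ _ => by simp [hαm, σ.prop]
  refine ⟨αm, ?_, ?_, ?_, ?_⟩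
  · intro σ; simp only [hαm]; split
    · exact hm1 _
    · exact le_refl 0
  · intro i; rw [key (fun σ v => v * σ i)]; exact hm2 i
  · rw [key (fun _ v => v)]; exact hm3
  · intro β hβ hgeβ
    rw [key (fun _ v => v)]
    by_cases hc : ∑ σ ∈ S, β σ ≤ c0
    · have : (fun σ : {σ // σ ∈ S} => β σ.val) ∈ K := by
        refine ⟨fun σ => hβ σ.val, fun i => ?_, ?_⟩
        · show x i ≤ ∑ σ : {σ // σ ∈ S}, β σ.val * σ.val i
          rw [Finset.sum_coe_sort S (fun σ => β σ * σ i)]; exact hgeβ i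
        · show ∑ σ : {σ // σ ∈ S}, β σ.val ≤ c0
          rw [Finset.sum_coe_sort S (fun σ => β σ)]; exact hc
      calc ∑ σ : {σ // σ ∈ S}, βm σ ≤ ∑ σ : {σ // σ ∈ S}, β σ.val := hβmin this
        _ = ∑ σ ∈ S, β σ := Finset.sum_coe_sort S (fun σ => β σ)
    · push_neg at hc
      calc ∑ σ : {σ // σ ∈ S}, βm σ ≤ c0 := hm3
        _ ≤ ∑ σ ∈ S, β σ := hc.le

lemma rho_le_card_aux
    (x : Fin N → ℝ)
    (α0 : (Fin N → ℝ) → ℝ) (hα0 : ∀ σ, 0 ≤ α0 σ)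
    (heq0 : ∀ i, ∑ σ ∈ S, α0 σ * σ i = x i)
    (htot0 : ∑ σ ∈ S, α0 σ = schedRho N S x)
    (hno : ¬ ∃ α : (Fin N → ℝ) → ℝ, (∀ σ, 0 ≤ α σ) ∧
      (∀ i, ∑ σ ∈ S, α σ * σ i = x i) ∧
      (∑ σ ∈ S, α σ = schedRho N S x) ∧ ∃ σ' ∈ S, 1 ≤ α σ') :
    schedRho N S x ≤ (N : ℝ) := by
  classical
  have hρle : ∀ α : (Fin N → ℝ) → ℝ, (∀ σ, 0 ≤ α σ) → (∀ i, x i ≤ ∑ σ ∈ S, α σ * σ i) →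
      schedRho N S x ≤ ∑ σ ∈ S, α σ := fun α h1 h2 => rho_le_of_mem ⟨α, h1, h2, rfl⟩
  suffices h : ∀ n : ℕ, ∀ α : (Fin N → ℝ) → ℝ, (∀ σ, 0 ≤ α σ) →
      (∀ i, ∑ σ ∈ S, α σ * σ i = x i) → (∑ σ ∈ S, α σ = schedRho N S x) →
      (S.filter fun σ => α σ ≠ 0).card ≤ n → schedRho N S x ≤ (N : ℝ) by
    exact h _ α0 hα0 heq0 htot0 le_rfl
  intro n
  induction n with
  | zero =>
    intro α hα heq htot hcard
    have hempty : (S.filter fun σ => α σ ≠ 0) = ∅ :=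
      Finset.card_eq_zero.mp (Nat.le_zero.mp hcard)
    have : schedRho N S x = 0 := by
      rw [← htot, ← Finset.sum_filter_ne_zero S, hempty, Finset.sum_empty]
    rw [this]
    positivity
  | succ n ih =>
    intro α hα heq htot hcard
    set F := S.filter fun σ => α σ ≠ 0 with hF
    have hFS : F ⊆ S := Finset.filter_subset _ _
    have hαF : ∀ σ ∈ S, σ ∉ F → α σ = 0 := by
      intro σ hσ h
      by_contra hne
      exact h (Finset.mem_filter.mpr ⟨hσ, hne⟩)
    have hαpos : ∀ σ ∈ F, 0 < α σ :=
      fun σ hσ => lt_of_le_of_ne (hα σ) (Ne.symm (Finset.mem_filter.mp hσ).2)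
    -- main reduction step: given a kernel direction with zero total and a positive entry,
    -- reduce the support and apply the inductive hypothesis
    have key : ∀ dd : (Fin N → ℝ) → ℝ, (∀ σ, σ ∉ F → dd σ = 0) →
        (∀ i, ∑ σ ∈ S, dd σ * σ i = 0) → (∑ σ ∈ S, dd σ = 0) →
        (∃ σp, σp ∈ F ∧ 0 < dd σp) → schedRho N S x ≤ (N : ℝ) := by
      rintro dd hdd0 hddc hddt ⟨σp, hσpF, hσppos⟩
      set T := F.filter fun σ => 0 < dd σ with hT
      have hTne : T.Nonempty := ⟨σp, Finset.mem_filter.mpr ⟨hσpF, hσppos⟩⟩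
      obtain ⟨σm, hσmT, hσmmin⟩ := Finset.exists_min_image T (fun σ => α σ / dd σ) hTne
      obtain ⟨hσmF, hσmpos⟩ := Finset.mem_filter.mp hσmT
      set t := α σm / dd σm with htdef
      have ht0 : 0 ≤ t := div_nonneg (hα σm) hσmpos.le
      set α2 : (Fin N → ℝ) → ℝ := fun σ => α σ - t * dd σ with hα2
      have hα2nn : ∀ σ, 0 ≤ α2 σ := by
        intro σ
        show 0 ≤ α σ - t * dd σ
        by_cases hσF : σ ∈ F
        · by_cases hσT : σ ∈ T
          · have hddσ : 0 < dd σ := (Finset.mem_filter.mp hσT).2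
            have := hσmmin σ hσT
            have h2 : t * dd σ ≤ α σ := by
              rw [htdef]
              calc α σm / dd σm * dd σ ≤ α σ / dd σ * dd σ :=
                mul_le_mul_of_nonneg_right this hddσ.le
                _ = α σ := div_mul_cancel₀ _ (ne_of_gt hddσ)
            linarith
          · have hddσ : dd σ ≤ 0 := by
              by_contra h
              push_neg at h
              exact hσT (Finset.mem_filter.mpr ⟨hσF, h⟩)
            have := hα σ
            nlinarith
        · rw [hdd0 σ hσF]
          have := hα σ
          linarith
      have hα2eq : ∀ i, ∑ σ ∈ S, α2 σ * σ i = x i := by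
        intro i
        have h1 : ∀ σ ∈ S, α2 σ * σ i = α σ * σ i - t * (dd σ * σ i) := by
          intro σ _; show (α σ - t * dd σ) * σ i = _; ring
        rw [Finset.sum_congr rfl h1, Finset.sum_sub_distrib, ← Finset.mul_sum, hddc i,
          mul_zero, sub_zero, heq i]
      have hα2tot : ∑ σ ∈ S, α2 σ = schedRho N S x := by
        have h1 : ∑ σ ∈ S, α2 σ = ∑ σ ∈ S, α σ - t * ∑ σ ∈ S, dd σ := by
          rw [Finset.mul_sum, ← Finset.sum_sub_distrib]
        rw [h1, hddt, mul_zero, sub_zero, htot]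
      have hα2σm : α2 σm = 0 := by
        show α σm - t * dd σm = 0
        rw [htdef, div_mul_cancel₀ _ (ne_of_gt hσmpos)]
        ring
      have hsub : (S.filter fun σ => α2 σ ≠ 0) ⊆ F.erase σm := by
        intro σ hσ
        obtain ⟨hσS, hσne⟩ := Finset.mem_filter.mp hσ
        have hσF : σ ∈ F := by
          by_contra h
          apply hσne
          show α σ - t * dd σ = 0
          rw [hαF σ hσS h, hdd0 σ h]
          ring
        exact Finset.mem_erase.mpr ⟨fun h => hσne (h ▸ hα2σm), hσF⟩
      have hcard' : (S.filter fun σ => α2 σ ≠ 0).card ≤ n := by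
        calc (S.filter fun σ => α2 σ ≠ 0).card ≤ (F.erase σm).card :=
            Finset.card_le_card hsub
          _ = F.card - 1 := Finset.card_erase_of_mem hσmF
          _ ≤ n := by simpa using Nat.sub_le_sub_right hcard 1
      exact ih α2 hα2nn hα2eq hα2tot hcard'
    by_cases hind : LinearIndependent ℝ (fun σ : {σ // σ ∈ F} => (σ : Fin N → ℝ))
    · have hcardN : F.card ≤ N := by
        have := hind.fintype_card_le_finrank
        rwa [Module.finrank_pi, Fintype.card_fin, Fintype.card_coe] at this
      have hlt1 : ∀ σ ∈ S, α σ < 1 := by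
        intro σ hσ
        by_contra h
        push_neg at h
        exact hno ⟨α, hα, heq, htot, σ, hσ, h⟩
      calc schedRho N S x = ∑ σ ∈ S, α σ := htot.symm
        _ = ∑ σ ∈ F, α σ := (Finset.sum_filter_ne_zero S).symm
        _ ≤ ∑ _σ ∈ F, (1 : ℝ) :=
            Finset.sum_le_sum fun σ hσ => (hlt1 σ (hFS hσ)).le
        _ = (F.card : ℝ) := by simp
        _ ≤ (N : ℝ) := Nat.cast_le.mpr hcardN
    · obtain ⟨g, hg0, w, hgw⟩ := Fintype.not_linearIndependent_iff.mp hind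
      set d : (Fin N → ℝ) → ℝ := fun σ => if h : σ ∈ F then g ⟨σ, h⟩ else 0 with hd
      have hd0 : ∀ σ, σ ∉ F → d σ = 0 := fun σ h => dif_neg h
      have hdF : ∀ σ : {σ // σ ∈ F}, d σ.val = g σ := by
        intro σ
        show (if h : σ.val ∈ F then g ⟨σ.val, h⟩ else 0) = g σ
        rw [dif_pos σ.prop]
      have hdc : ∀ i, ∑ σ ∈ S, d σ * σ i = 0 := by
        intro i
        have h1 : ∑ σ ∈ S, d σ * σ i = ∑ σ ∈ F, d σ * σ i :=
          (Finset.sum_subset hFS (fun σ _ hσ => by rw [hd0 σ hσ, zero_mul])).symm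
        rw [h1, ← Finset.sum_coe_sort F (fun σ => d σ * σ i)]
        have h2 : ∑ σ : {σ // σ ∈ F}, d σ.val * σ.val i
            = ∑ σ : {σ // σ ∈ F}, g σ * σ.val i :=
          Finset.sum_congr rfl fun σ _ => by rw [hdF σ]
        rw [h2]
        have h3 := congrFun hg0 i
        simpa [Finset.sum_apply] using h3
      have hdt : ∑ σ ∈ S, d σ = 0 := by
        by_contra he
        set e := ∑ σ ∈ S, d σ with hedef
        have hFne : F.Nonempty := ⟨w.val, w.prop⟩
        obtain ⟨σ0, hσ0F, hσ0min⟩ :=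
          Finset.exists_min_image F (fun σ => α σ / (|d σ| + 1)) hFne
        set t0 := α σ0 / (|d σ0| + 1) with ht0def
        have ht0pos : 0 < t0 := div_pos (hαpos σ0 hσ0F) (by positivity)
        set t : ℝ := if 0 < e then t0 else -t0 with ht
        have habs : |t| = t0 := by
          rw [ht]
          split_ifs
          · exact abs_of_pos ht0pos
          · rw [abs_neg]; exact abs_of_pos ht0pos
        have hte : 0 < t * e := by
          rw [ht]
          rcases lt_or_gt_of_ne he with h | h
          · rw [if_neg (by linarith)]
            nlinarith
          · rw [if_pos h]
            nlinarith
        have hbound : ∀ σ ∈ F, |t * d σ| ≤ α σ := by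
          intro σ hσ
          have h1 : t0 ≤ α σ / (|d σ| + 1) := hσ0min σ hσ
          have h2 : (0:ℝ) < |d σ| + 1 := by positivity
          have h3 : t0 * (|d σ| + 1) ≤ α σ := by
            rw [← le_div_iff₀ h2]; exact h1
          rw [abs_mul, habs]
          nlinarith [abs_nonneg (d σ), ht0pos]
        set α2 : (Fin N → ℝ) → ℝ := fun σ => α σ - t * d σ with hα2
        have hα2nn : ∀ σ, 0 ≤ α2 σ := by
          intro σ
          show 0 ≤ α σ - t * d σ
          by_cases hσF : σ ∈ F
          · have := hbound σ hσF
            have := abs_le.mp this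
            linarith [this.2]
          · rw [hd0 σ hσF, mul_zero]
            have := hα σ
            linarith
        have hα2ge : ∀ i, x i ≤ ∑ σ ∈ S, α2 σ * σ i := by
          intro i
          have h1 : ∀ σ ∈ S, α2 σ * σ i = α σ * σ i - t * (d σ * σ i) := by
            intro σ _; show (α σ - t * d σ) * σ i = _; ring
          rw [Finset.sum_congr rfl h1, Finset.sum_sub_distrib, ← Finset.mul_sum, hdc i,
            mul_zero, sub_zero, heq i]
        have hα2tot : ∑ σ ∈ S, α2 σ = schedRho N S x - t * e := by
          have h1 : ∑ σ ∈ S, α2 σ = ∑ σ ∈ S, α σ - t * ∑ σ ∈ S, d σ := by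
            rw [Finset.mul_sum, ← Finset.sum_sub_distrib]
          rw [h1, htot, ← hedef]
        have := hρle α2 hα2nn hα2ge
        rw [hα2tot] at this
        linarith
      rcases lt_or_gt_of_ne hgw with h | h
      · have h1 : ∀ σ, σ ∉ F → -d σ = 0 := fun σ hσ => by rw [hd0 σ hσ, neg_zero]
        have h2 : ∀ i, ∑ σ ∈ S, -d σ * σ i = 0 := by
          intro i
          have h2' : ∀ σ ∈ S, -d σ * σ i = -(d σ * σ i) := fun σ _ => by ring
          rw [Finset.sum_congr rfl h2', Finset.sum_neg_distrib, hdc i, neg_zero]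
        have h3 : ∑ σ ∈ S, -d σ = 0 := by rw [Finset.sum_neg_distrib, hdt, neg_zero]
        have h4 : 0 < -d w.val := by rw [hdF w]; linarith
        exact key (fun σ => -d σ) h1 h2 h3 ⟨w.val, w.prop, h4⟩
      · exact key d hd0 hdc hdt ⟨w.val, w.prop, by rw [hdF w]; linarith⟩

lemma rho_attained (hunit : ∀ i : Fin N, (fun k => if k = i then (1 : ℝ) else 0) ∈ S)
    (x : Fin N → ℝ) :
    ∃ α : (Fin N → ℝ) → ℝ, (∀ σ, 0 ≤ α σ) ∧ (∀ i, x i ≤ ∑ σ ∈ S, α σ * σ i) ∧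
      ∑ σ ∈ S, α σ = schedRho N S x := by
  obtain ⟨c0, α0, hα0, hge0, hc0⟩ := rhoSet_nonempty hunit x
  obtain ⟨αm, h1, h2, _, h4⟩ := exists_min_feasible x c0 α0 hα0 hge0 hc0
  refine ⟨αm, h1, h2, le_antisymm ?_ (rho_le_of_mem ⟨αm, h1, h2, rfl⟩)⟩
  refine le_csInf (rhoSet_nonempty hunit x) ?_
  rintro c ⟨β, hβ, hgeβ, rfl⟩
  exact h4 β hβ hgeβ

lemma rho_attained_eq (hS01 : ∀ σ ∈ S, ∀ i, σ i = 0 ∨ σ i = 1)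
    (hmono : ∀ σ ∈ S, ∀ σ' : Fin N → ℝ,
      (∀ i, σ' i = 0 ∨ σ' i = 1) → (∀ i, σ' i ≤ σ i) → σ' ∈ S)
    (hunit : ∀ i : Fin N, (fun k => if k = i then (1 : ℝ) else 0) ∈ S)
    {x : Fin N → ℝ} (hx : ∀ i, 0 ≤ x i) :
    ∃ α : (Fin N → ℝ) → ℝ, (∀ σ, 0 ≤ α σ) ∧ (∀ i, ∑ σ ∈ S, α σ * σ i = x i) ∧
      ∑ σ ∈ S, α σ = schedRho N S x := by
  obtain ⟨α, hα, hge, htot⟩ := rho_attained hunit x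
  obtain ⟨α', h1, h2, h3⟩ := toEquality hS01 hmono hx α hα hge
  exact ⟨α', h1, h2, h3.trans htot⟩

lemma rho_le_card (hS01 : ∀ σ ∈ S, ∀ i, σ i = 0 ∨ σ i = 1)
    (hmono : ∀ σ ∈ S, ∀ σ' : Fin N → ℝ,
      (∀ i, σ' i = 0 ∨ σ' i = 1) → (∀ i, σ' i ≤ σ i) → σ' ∈ S)
    (hunit : ∀ i : Fin N, (fun k => if k = i then (1 : ℝ) else 0) ∈ S)
    {x : Fin N → ℝ} (hx : ∀ i, 0 ≤ x i)
    (hno : ¬ ∃ α : (Fin N → ℝ) → ℝ, (∀ σ, 0 ≤ α σ) ∧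
      (∀ i, ∑ σ ∈ S, α σ * σ i = x i) ∧
      (∑ σ ∈ S, α σ = schedRho N S x) ∧ ∃ σ' ∈ S, 1 ≤ α σ') :
    schedRho N S x ≤ (N : ℝ) := by
  obtain ⟨α0, hα0, heq0, htot0⟩ := rho_attained_eq hS01 hmono hunit hx
  exact rho_le_card_aux x α0 hα0 heq0 htot0 hno

end SchedAux

open SchedAux in
theorem stmt5 (N : ℕ) (S : Finset (Fin N → ℝ)) (hSne : S.Nonempty)
    (hS01 : ∀ σ ∈ S, ∀ i, σ i = 0 ∨ σ i = 1)
    (hmono : ∀ σ ∈ S, ∀ σ' : Fin N → ℝ,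
      (∀ i, σ' i = 0 ∨ σ' i = 1) → (∀ i, σ' i ≤ σ i) → σ' ∈ S)
    (hunit : ∀ i : Fin N, (fun k => if k = i then (1 : ℝ) else 0) ∈ S)
    (hzero : (0 : Fin N → ℝ) ∈ S)
    (D dB dL : ℕ → Fin N → ℝ)
    (hD0 : D 0 = 0)
    (hrec : ∀ τ, D (τ + 1) = D τ - dB τ + dL τ)
    (hdB : ∀ τ, dB τ ∈ S)
    (hdLnn : ∀ τ i, 0 ≤ dL τ i)
    (hdL : ∀ τ, schedRho N S (dL τ) ≤ 1)
    (hrule : ∀ τ,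
      (∃ α : (Fin N → ℝ) → ℝ, (∀ σ, 0 ≤ α σ) ∧
          (∀ i, ∑ σ ∈ S, α σ * σ i = D τ i) ∧
          (∑ σ ∈ S, α σ = schedRho N S (D τ)) ∧ 1 ≤ α (dB τ))
      ∨ ((¬ ∃ α : (Fin N → ℝ) → ℝ, (∀ σ, 0 ≤ α σ) ∧
            (∀ i, ∑ σ ∈ S, α σ * σ i = D τ i) ∧
            (∑ σ ∈ S, α σ = schedRho N S (D τ)) ∧ ∃ σ' ∈ S, 1 ≤ α σ') ∧
          (∀ i, dB τ i ≤ D τ i) ∧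
          ∀ σ ∈ S, (∀ i, σ i ≤ D τ i) → ∑ i, σ i ≤ ∑ i, dB τ i)) :
    ∀ τ, schedRho N S (D τ) ≤ (N : ℝ) + 2 ∧
      ∑ i, D τ i ≤ (S.sup' hSne fun σ => ∑ i, σ i) * ((N : ℝ) + 2) := by
  classical
  have hσnn : ∀ σ ∈ S, ∀ i, 0 ≤ σ i := by
    intro σ hσ i
    rcases hS01 σ hσ i with h | h <;> rw [h] <;> norm_num
  have key : ∀ τ, (∀ i, 0 ≤ D τ i) ∧ schedRho N S (D τ) ≤ (N : ℝ) + 2 := by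
    intro τ
    induction τ with
    | zero =>
      constructor
      · intro i; simp [hD0]
      · rw [hD0]
        have h0 : (0 : ℝ) ∈ RhoSet N S 0 := by
          refine ⟨fun _ => 0, fun _ => le_rfl, fun i => ?_, by simp⟩
          simp
        calc schedRho N S 0 ≤ 0 := rho_le_of_mem h0
          _ ≤ (N : ℝ) + 2 := by positivity
    | succ τ ihτ =>
      obtain ⟨hDnn, hDρ⟩ := ihτ
      have hdBle : ∀ i, dB τ i ≤ D τ i := by
        rcases hrule τ with ⟨α, hα, heq, _, hge1⟩ | ⟨_, h, _⟩
        · intro i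
          rw [← heq i]
          have hdBnn : 0 ≤ dB τ i := hσnn _ (hdB τ) i
          calc dB τ i = 1 * dB τ i := (one_mul _).symm
            _ ≤ α (dB τ) * dB τ i := mul_le_mul_of_nonneg_right hge1 hdBnn
            _ ≤ ∑ σ ∈ S, α σ * σ i :=
              Finset.single_le_sum (f := fun σ => α σ * σ i)
                (fun σ hσ => mul_nonneg (hα σ) (hσnn σ hσ i)) (hdB τ)
        · exact h
      have hDnn' : ∀ i, 0 ≤ D (τ + 1) i := by
        intro i
        rw [hrec τ]
        simp only [Pi.add_apply, Pi.sub_apply]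
        have h1 := hdLnn τ i
        have h2 := hdBle i
        linarith
      refine ⟨hDnn', ?_⟩
      have h1 : schedRho N S (D (τ + 1)) ≤ schedRho N S (D τ - dB τ) + 1 := by
        rw [hrec τ]
        calc schedRho N S (D τ - dB τ + dL τ)
            ≤ schedRho N S (D τ - dB τ) + schedRho N S (dL τ) :=
              rho_subadd hunit _ _
          _ ≤ schedRho N S (D τ - dB τ) + 1 := by linarith [hdL τ]
      rcases hrule τ with ⟨α, hα, heq, htot, hge1⟩ | ⟨hno, hle, _⟩
      · have hmem : schedRho N S (D τ) - 1 ∈ RhoSet N S (D τ - dB τ) := by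
          refine ⟨fun σ => α σ - if σ = dB τ then 1 else 0, ?_, ?_, ?_⟩
          · intro σ
            show 0 ≤ α σ - if σ = dB τ then 1 else 0
            by_cases h : σ = dB τ
            · rw [if_pos h, h]; linarith
            · rw [if_neg h]; have := hα σ; linarith
          · intro i
            have hterm : ∀ σ ∈ S, (α σ - if σ = dB τ then 1 else 0) * σ i
                = α σ * σ i - (if σ = dB τ then σ i else 0) := by
              intro σ _
              split_ifs <;> ring
            rw [Finset.sum_congr rfl hterm, Finset.sum_sub_distrib,
              Finset.sum_ite_eq' S (dB τ) (fun σ => σ i), if_pos (hdB τ), heq i]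
            simp
          · have hterm : ∀ σ ∈ S, (α σ - if σ = dB τ then 1 else 0)
                = α σ - (if σ = dB τ then (1:ℝ) else 0) := fun σ _ => rfl
            rw [Finset.sum_congr rfl hterm, Finset.sum_sub_distrib,
              Finset.sum_ite_eq' S (dB τ) (fun _ => (1:ℝ)), if_pos (hdB τ), htot]
        have h2 : schedRho N S (D τ - dB τ) ≤ schedRho N S (D τ) - 1 :=
          rho_le_of_mem hmem
        linarith
      · have h2 : schedRho N S (D τ - dB τ) ≤ schedRho N S (D τ) := by
          apply rho_mono hunit
          intro i
          simp only [Pi.sub_apply]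
          have := hσnn _ (hdB τ) i
          linarith
        have h3 : schedRho N S (D τ) ≤ (N : ℝ) := rho_le_card hS01 hmono hunit hDnn hno
        linarith
  intro τ
  refine ⟨(key τ).2, ?_⟩
  obtain ⟨α, hα, hge, htot⟩ := rho_attained hunit (D τ)
  have hK0 : (0:ℝ) ≤ S.sup' hSne fun σ => ∑ i, σ i := by
    have := Finset.le_sup' (fun σ : Fin N → ℝ => ∑ i, σ i) hzero
    simp only [Pi.zero_apply, Finset.sum_const_zero] at this; exact this
  calc ∑ i, D τ i ≤ ∑ i, ∑ σ ∈ S, α σ * σ i := Finset.sum_le_sum fun i _ => hge i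
    _ = ∑ σ ∈ S, α σ * ∑ i, σ i := by
        rw [Finset.sum_comm]
        exact Finset.sum_congr rfl fun σ _ => (Finset.mul_sum _ _ _).symm
    _ ≤ ∑ σ ∈ S, α σ * (S.sup' hSne fun σ => ∑ i, σ i) :=
        Finset.sum_le_sum fun σ hσ =>
          mul_le_mul_of_nonneg_left (Finset.le_sup' _ hσ) (hα σ)
    _ = (S.sup' hSne fun σ => ∑ i, σ i) * schedRho N S (D τ) := by
        rw [← Finset.sum_mul, htot]; ring
    _ ≤ (S.sup' hSne fun σ => ∑ i, σ i) * ((N : ℝ) + 2) := by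
        have h2 := (key τ).2
        nlinarith [hK0, h2]
end

section
/- Consider a single-server discrete-time queue with workload recursion W(τ+1) = max(W(τ) − 1, 0) + a(τ), where a(τ) are i.i.d. nonnegative random variables with E[a(0)] < 1 and log-MGF log f(θ) = log E[e^{θ a(0)}] finite for all θ in a neighborhood of 0. Suppose there exists θ* > 0 with log f(θ*) = θ* and log f(θ) < θ for θ ∈ (0, θ*). Then for any stationary distribution of W, the tail satisfies lim_{L→∞} (1/L) log P(W(∞) ≥ L) = −θ*. -/
open MeasureTheory Set Filter Real
open scoped ENNReal
set_option linter.unusedSectionVars false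
noncomputable section
namespace Stmt16Aux

def T (p : ℝ × ℝ) : ℝ := max (p.1 - 1) 0 + p.2
lemma measurable_T : Measurable T := by unfold T; fun_prop

def addStep (p : ℝ × ℝ) : ℝ := p.1 + p.2 - 1
lemma measurable_addStep : Measurable addStep := by unfold addStep; fun_prop

def kapStep (q : (ℝ × ℝ) × ℝ) : ℝ × ℝ := (q.1.1 + q.2 - 1, T (q.1.2, q.2))
lemma measurable_kapStep : Measurable kapStep := by unfold kapStep T; fun_prop

variable (μ : Measure ℝ) [IsProbabilityMeasure μ]

def tau : ℕ → Measure ℝ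
  | 0 => Measure.dirac 0
  | n+1 => Measure.map addStep ((tau n).prod μ)

def sig : ℕ → Measure ℝ
  | 0 => Measure.dirac 0
  | n+1 => Measure.map T ((sig n).prod μ)

variable (ν : Measure ℝ) [IsProbabilityMeasure ν]

def kap : ℕ → Measure (ℝ × ℝ)
  | 0 => Measure.map (fun w : ℝ => (w, 0)) ν
  | n+1 => Measure.map kapStep ((kap n).prod μ)

instance tau_prob : ∀ n, IsProbabilityMeasure (tau μ n)
  | 0 => by unfold tau; infer_instance
  | n+1 => by
      have := tau_prob n
      unfold tau
      exact Measure.isProbabilityMeasure_map measurable_addStep.aemeasurable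

instance sig_prob : ∀ n, IsProbabilityMeasure (sig μ n)
  | 0 => by unfold sig; infer_instance
  | n+1 => by
      have := sig_prob n
      unfold sig
      exact Measure.isProbabilityMeasure_map measurable_T.aemeasurable

instance kap_prob : ∀ n, IsProbabilityMeasure (kap μ ν n)
  | 0 => by
      unfold kap
      exact Measure.isProbabilityMeasure_map (by fun_prop)
  | n+1 => by
      have := kap_prob n
      unfold kap
      exact Measure.isProbabilityMeasure_map measurable_kapStep.aemeasurable

lemma map_sec {α γ : Type*} [MeasurableSpace α] [MeasurableSpace γ]
    (κ : Measure α) [SFinite κ] {f : α × ℝ → γ} (hf : Measurable f)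
    {s : Set γ} (hs : MeasurableSet s) :
    Measure.map f (κ.prod μ) s = ∫⁻ a, κ ((fun x => f (x, a)) ⁻¹' s) ∂μ := by
  rw [Measure.map_apply hf hs, Measure.prod_apply_symm (hf hs)]
  rfl

lemma T_section (a L : ℝ) :
    {w : ℝ | T (w, a) ∈ Ici L} = if L ≤ a then univ else Ici (L + 1 - a) := by
  ext w
  simp only [T, mem_setOf_eq, mem_Ici, mem_ite_univ_left, not_le]
  constructor
  · intro h ha
    rcases le_max_iff.1 (by linarith : L - a ≤ max (w - 1) 0) with h1 | h1
    · linarith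
    · linarith
  · intro h
    rcases le_or_gt L a with ha | ha
    · have : (0:ℝ) ≤ max (w - 1) 0 := le_max_right _ _
      linarith
    · have h2 := h ha
      have h3 : L - a ≤ w - 1 := by linarith
      have h4 := le_max_left (w - 1) (0:ℝ)
      linarith

lemma addStep_section (a L : ℝ) :
    {t : ℝ | addStep (t, a) ∈ Ici L} = Ici (L + 1 - a) := by
  ext t
  simp only [addStep, mem_setOf_eq, mem_Ici]
  constructor <;> intro <;> linarith

lemma addStep_map_apply (κ : Measure ℝ) [SFinite κ] (L : ℝ) :
    Measure.map addStep (κ.prod μ) (Ici L) = ∫⁻ a, κ (Ici (L + 1 - a)) ∂μ := by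
  rw [map_sec μ κ measurable_addStep measurableSet_Ici]
  congr 1
  ext a
  congr 1
  exact addStep_section a L

lemma tau_succ_apply (n : ℕ) (L : ℝ) :
    tau μ (n+1) (Ici L) = ∫⁻ a, tau μ n (Ici (L + 1 - a)) ∂μ := by
  show Measure.map addStep ((tau μ n).prod μ) (Ici L) = _
  exact addStep_map_apply μ _ L

lemma tau_zero_apply (L : ℝ) :
    tau μ 0 (Ici L) = if L ≤ 0 then 1 else 0 := by
  show Measure.dirac (0:ℝ) (Ici L) = _
  rw [Measure.dirac_apply' _ measurableSet_Ici]
  by_cases h : L ≤ 0 <;> simp [indicator, mem_Ici, h]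

section NU
variable {μ ν}
variable (hnn : μ {x | x < 0} = 0) (hstat : ν = Measure.map T (ν.prod μ))

include hnn hstat

lemma nu_neg_zero : ν {x | x < 0} = 0 := by
  have hms : MeasurableSet {x : ℝ | x < 0} := measurableSet_Iio (a := (0:ℝ))
  rw [hstat, map_sec μ ν measurable_T hms]
  have h : (fun a => ν ((fun w => T (w, a)) ⁻¹' {x | x < 0})) =ᵐ[μ] 0 := by
    have h0 : ∀ᵐ a ∂μ, (0:ℝ) ≤ a := by
      rw [ae_iff]; simpa [not_le] using hnn
    filter_upwards [h0] with a ha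
    have he : ((fun w => T (w, a)) ⁻¹' {x | x < 0}) = ∅ := by
      ext w
      simp only [T, mem_preimage, mem_setOf_eq, mem_empty_iff_false, iff_false, not_lt]
      have : (0:ℝ) ≤ max (w - 1) 0 := le_max_right _ _
      linarith
    simp [he]
  rw [lintegral_congr_ae h]
  simp

lemma nu_Ici_one_of_nonpos {L : ℝ} (hL : L ≤ 0) : ν (Ici L) = 1 := by
  have h1 : ν ({x : ℝ | x < 0}ᶜ) = 1 := by
    have h0 := prob_compl_eq_one_sub (μ := ν) (measurableSet_Iio (a := (0:ℝ)))
    have h2 : ({x : ℝ | x < 0} : Set ℝ) = Iio 0 := rfl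
    rw [h2, h0, show (Iio (0:ℝ)) = {x : ℝ | x < 0} from rfl, nu_neg_zero hnn hstat]
    simp
  have hsub : ({x : ℝ | x < 0}ᶜ : Set ℝ) ⊆ Ici L := by
    intro x hx
    simp only [mem_compl_iff, mem_setOf_eq, not_lt] at hx
    exact le_trans hL hx
  exact le_antisymm prob_le_one (h1 ▸ measure_mono hsub)

omit hnn in
lemma nu_formula (L : ℝ) :
    ν (Ici L) = ∫⁻ a, (if L ≤ a then 1 else ν (Ici (L + 1 - a))) ∂μ := by
  conv_lhs => rw [hstat, map_sec μ ν measurable_T measurableSet_Ici]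
  congr 1
  ext a
  have h : ((fun w => T (w, a)) ⁻¹' Ici L) = {w : ℝ | T (w, a) ∈ Ici L} := rfl
  rw [h, T_section]
  split <;> simp

lemma tau_le_nu : ∀ n, ∀ L : ℝ, tau μ n (Ici L) ≤ ν (Ici L) := by
  intro n
  induction n with
  | zero =>
    intro L
    rw [tau_zero_apply]
    split
    · rw [nu_Ici_one_of_nonpos hnn hstat ‹L ≤ 0›]
    · exact zero_le
  | succ n ih =>
    intro L
    rw [tau_succ_apply, nu_formula hstat L]
    apply lintegral_mono
    intro a
    by_cases ha : L ≤ a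
    · simp only [ha, if_true]
      exact prob_le_one
    · simp only [ha, if_false]
      exact ih _

/-- key upper chain -/
lemma nu_le_kap : ∀ n, ∀ L : ℝ, ν (Ici L) ≤ kap μ ν n {p : ℝ × ℝ | L ≤ max p.1 p.2} := by
  have hms : ∀ L : ℝ, MeasurableSet {p : ℝ × ℝ | L ≤ max p.1 p.2} := by
    intro L
    exact measurableSet_le measurable_const (measurable_fst.max measurable_snd)
  intro n
  induction n with
  | zero =>
    intro L
    show _ ≤ Measure.map (fun w : ℝ => (w, 0)) ν _
    rw [Measure.map_apply (by fun_prop) (hms L)]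
    apply measure_mono
    intro w hw
    simp only [mem_preimage, mem_setOf_eq]
    exact le_max_of_le_left hw
  | succ n ih =>
    intro L
    rw [nu_formula hstat L]
    show _ ≤ Measure.map kapStep ((kap μ ν n).prod μ) _
    rw [map_sec μ _ measurable_kapStep (hms L)]
    apply lintegral_mono
    intro a
    by_cases ha : L ≤ a
    · simp only [ha, if_true]
      have he : ((fun x : ℝ × ℝ => kapStep (x, a)) ⁻¹' {p : ℝ × ℝ | L ≤ max p.1 p.2}) = univ := by
        apply eq_univ_iff_forall.2
        intro p
        simp only [mem_preimage, kapStep, T, mem_setOf_eq]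
        refine le_max_of_le_right ?_
        have : (0:ℝ) ≤ max (p.2 - 1) 0 := le_max_right _ _
        linarith
      rw [he]
      exact (measure_univ (μ := kap μ ν n)).ge
    · simp only [ha, if_false]
      refine le_trans (ih (L + 1 - a)) (measure_mono ?_)
      intro p hp
      simp only [mem_setOf_eq] at hp
      simp only [mem_preimage, kapStep, T, mem_setOf_eq]
      rcases le_max_iff.1 hp with h1 | h1
      · exact le_max_of_le_left (by linarith)
      · refine le_max_of_le_right ?_
        have := le_max_left (p.2 - 1) (0:ℝ)
        linarith

end NU

section MARG
variable {ν}

lemma kap_fst (hstat : ν = Measure.map T (ν.prod μ)) :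
    ∀ n, Measure.map Prod.fst (kap μ ν n) =
      (match n with
        | 0 => ν
        | n+1 => Measure.map addStep ((Measure.map Prod.fst (kap μ ν n)).prod μ)) := by
  intro n
  match n with
  | 0 =>
    show Measure.map Prod.fst (Measure.map (fun w : ℝ => (w, 0)) ν) = ν
    rw [Measure.map_map measurable_fst (by fun_prop)]
    simp [Function.comp_def]
  | n+1 =>
    show Measure.map Prod.fst (Measure.map kapStep ((kap μ ν n).prod μ)) = _
    rw [Measure.map_map measurable_fst measurable_kapStep]
    have h1 : (Prod.fst ∘ kapStep) = addStep ∘ (Prod.map (Prod.fst : ℝ × ℝ → ℝ) (id : ℝ → ℝ)) := by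
      ext q
      simp [kapStep, addStep, Function.comp_def, Prod.map]
    rw [h1, ← Measure.map_map measurable_addStep (measurable_fst.prodMap measurable_id),
      ← Measure.map_prod_map _ _ measurable_fst measurable_id, Measure.map_id]

lemma kap_snd : ∀ n, Measure.map Prod.snd (kap μ ν n) = sig μ n := by
  intro n
  induction n with
  | zero =>
    show Measure.map Prod.snd (Measure.map (fun w : ℝ => (w, 0)) ν) = Measure.dirac 0
    rw [Measure.map_map measurable_snd (by fun_prop)]
    have : ((Prod.snd ∘ fun w : ℝ => (w, (0:ℝ)))) = fun _ : ℝ => (0:ℝ) := rfl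
    rw [this, Measure.map_const]
    simp
  | succ n ih =>
    show Measure.map Prod.snd (Measure.map kapStep ((kap μ ν n).prod μ)) = _
    rw [Measure.map_map measurable_snd measurable_kapStep]
    have h1 : (Prod.snd ∘ kapStep) = T ∘ (Prod.map (Prod.snd : ℝ × ℝ → ℝ) (id : ℝ → ℝ)) := by
      ext q
      simp [kapStep, T, Function.comp_def, Prod.map]
    rw [h1, ← Measure.map_map measurable_T (measurable_snd.prodMap measurable_id),
      ← Measure.map_prod_map _ _ measurable_snd measurable_id, Measure.map_id, ih]
    rfl

/-- union bound through the two marginals -/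
lemma kap_union (n : ℕ) (L : ℝ) :
    kap μ ν n {p : ℝ × ℝ | L ≤ max p.1 p.2}
      ≤ Measure.map Prod.fst (kap μ ν n) (Ici L) + sig μ n (Ici L) := by
  rw [← kap_snd μ (ν := ν) n, Measure.map_apply measurable_fst measurableSet_Ici,
    Measure.map_apply measurable_snd measurableSet_Ici]
  refine le_trans (measure_mono ?_) (measure_union_le _ _)
  intro p hp
  simp only [mem_setOf_eq] at hp
  rcases le_max_iff.1 hp with h | h
  · exact Or.inl h
  · exact Or.inr h

/-- bound for the first marginal -/
lemma lam_bound (hstat : ν = Measure.map T (ν.prod μ)) :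
    ∀ n, ∀ L c : ℝ, Measure.map Prod.fst (kap μ ν n) (Ici L)
      ≤ ν (Ici c) + tau μ n (Ici (L - c)) := by
  intro n
  induction n with
  | zero =>
    intro L c
    rw [kap_fst μ hstat 0, tau_zero_apply]
    rcases le_or_gt c L with h | h
    · refine le_trans (measure_mono (Ici_subset_Ici.2 h)) le_self_add
    · have : L - c ≤ 0 := by linarith
      simp only [this, if_true]
      exact le_trans prob_le_one le_add_self
  | succ n ih =>
    intro L c
    rw [kap_fst μ hstat (n+1), addStep_map_apply, tau_succ_apply]
    calc ∫⁻ a, Measure.map Prod.fst (kap μ ν n) (Ici (L + 1 - a)) ∂μ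
        ≤ ∫⁻ a, (ν (Ici c) + tau μ n (Ici (L + 1 - a - c))) ∂μ := by
          apply lintegral_mono
          intro a
          exact ih (L + 1 - a) c
      _ = ν (Ici c) + ∫⁻ a, tau μ n (Ici (L + 1 - a - c)) ∂μ := by
          rw [lintegral_add_left measurable_const]
          simp
      _ = ν (Ici c) + ∫⁻ a, tau μ n (Ici (L - c + 1 - a)) ∂μ := by
          congr 1
          apply lintegral_congr
          intro a
          congr 2
          ring
      _ = _ := rfl

end MARG

section SUPER

lemma tau_superadd : ∀ m n : ℕ, ∀ A B : ℝ,
    tau μ n (Ici A) * tau μ m (Ici B) ≤ tau μ (n + m) (Ici (A + B)) := by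
  intro m
  induction m with
  | zero =>
    intro n A B
    rw [tau_zero_apply]
    split
    · rw [mul_one]
      exact measure_mono (Ici_subset_Ici.2 (by linarith))
    · simp
  | succ m ih =>
    intro n A B
    have hstep : n + (m + 1) = (n + m) + 1 := rfl
    rw [hstep, tau_succ_apply, tau_succ_apply]
    calc tau μ n (Ici A) * ∫⁻ a, tau μ m (Ici (B + 1 - a)) ∂μ
        = ∫⁻ a, tau μ n (Ici A) * tau μ m (Ici (B + 1 - a)) ∂μ := by
          rw [lintegral_const_mul' _ _ (measure_ne_top _ _)]
      _ ≤ ∫⁻ a, tau μ (n + m) (Ici (A + B + 1 - a)) ∂μ := by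
          apply lintegral_mono
          intro a
          have := ih n A (B + 1 - a)
          simpa [show A + (B + 1 - a) = A + B + 1 - a by ring] using this
end SUPER

section MGF

def Lmgf (θ : ℝ) : ℝ≥0∞ := ∫⁻ a, ENNReal.ofReal (exp (θ * a)) ∂μ

lemma measurable_expfun (θ : ℝ) : Measurable (fun x : ℝ => ENNReal.ofReal (exp (θ * x))) := by
  fun_prop

lemma tau_lintegral (θ : ℝ) : ∀ n,
    ∫⁻ x, ENNReal.ofReal (exp (θ * x)) ∂(tau μ n)
      = (ENNReal.ofReal (exp (-θ)) * Lmgf μ θ) ^ n := by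
  intro n
  induction n with
  | zero =>
    rw [show tau μ 0 = Measure.dirac 0 from rfl, lintegral_dirac' _ (measurable_expfun θ),
      pow_zero]
    simp
  | succ n ih =>
    show ∫⁻ x, ENNReal.ofReal (exp (θ * x)) ∂(Measure.map addStep ((tau μ n).prod μ)) = _
    have hmeas : AEMeasurable (fun p : ℝ × ℝ => ENNReal.ofReal (exp (θ * addStep p)))
        ((tau μ n).prod μ) := ((measurable_expfun θ).comp measurable_addStep).aemeasurable
    rw [lintegral_map (measurable_expfun θ) measurable_addStep, lintegral_prod _ hmeas]
    have hinner : ∀ t : ℝ, ∫⁻ a, ENNReal.ofReal (exp (θ * addStep (t, a))) ∂μ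
        = (ENNReal.ofReal (exp (-θ)) * Lmgf μ θ) * ENNReal.ofReal (exp (θ * t)) := by
      intro t
      have hpt : ∀ a : ℝ, ENNReal.ofReal (exp (θ * addStep (t, a)))
          = (ENNReal.ofReal (exp (-θ)) * ENNReal.ofReal (exp (θ * t)))
            * ENNReal.ofReal (exp (θ * a)) := by
        intro a
        rw [← ENNReal.ofReal_mul (by positivity), ← ENNReal.ofReal_mul (by positivity),
          ← exp_add, ← exp_add]
        congr 1
        rw [exp_eq_exp]
        show θ * (t + a - 1) = -θ + θ * t + θ * a
        ring
      simp_rw [hpt]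
      rw [lintegral_const_mul _ (measurable_expfun θ)]
      show ENNReal.ofReal (exp (-θ)) * ENNReal.ofReal (exp (θ * t)) * Lmgf μ θ = _
      ring
    simp_rw [hinner]
    rw [lintegral_const_mul _ (measurable_expfun θ), ih]
    ring

lemma chernoff (κ : Measure ℝ) {θ : ℝ} (hθ : 0 < θ) (L : ℝ) :
    κ (Ici L) ≤ ENNReal.ofReal (exp (-(θ * L))) * ∫⁻ x, ENNReal.ofReal (exp (θ * x)) ∂κ := by
  have hm := mul_meas_ge_le_lintegral₀ (μ := κ) (measurable_expfun θ).aemeasurable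
    (ENNReal.ofReal (exp (θ * L)))
  have hsub : Ici L ⊆ {x : ℝ | ENNReal.ofReal (exp (θ * L)) ≤ ENNReal.ofReal (exp (θ * x))} := by
    intro x hx
    exact ENNReal.ofReal_le_ofReal (exp_le_exp.2 (by nlinarith [mem_Ici.1 hx]))
  calc κ (Ici L)
      = ENNReal.ofReal (exp (-(θ * L))) * (ENNReal.ofReal (exp (θ * L)) * κ (Ici L)) := by
        rw [← mul_assoc, ← ENNReal.ofReal_mul (by positivity), ← exp_add]
        simp
    _ ≤ ENNReal.ofReal (exp (-(θ * L)))
        * (ENNReal.ofReal (exp (θ * L)) * κ {x : ℝ | ENNReal.ofReal (exp (θ * L)) ≤ ENNReal.ofReal (exp (θ * x))}) := by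
        gcongr
    _ ≤ _ := by gcongr

lemma sig_lintegral_le {θ Fθ : ℝ} (hθ : 0 < θ) (hF : Lmgf μ θ = ENNReal.ofReal Fθ)
    (hF1 : 1 ≤ Fθ) (hρ : exp (-θ) * Fθ < 1) :
    ∀ n, ∫⁻ x, ENNReal.ofReal (exp (θ * x)) ∂(sig μ n)
      ≤ ENNReal.ofReal (Fθ / (1 - exp (-θ) * Fθ)) := by
  set C := Fθ / (1 - exp (-θ) * Fθ) with hCdef
  have hden : 0 < 1 - exp (-θ) * Fθ := by linarith
  have hC1 : 1 ≤ C := by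
    rw [le_div_iff₀ hden]
    nlinarith [exp_pos (-θ)]
  have hC0 : 0 ≤ C := le_trans zero_le_one hC1
  intro n
  induction n with
  | zero =>
    show ∫⁻ x, ENNReal.ofReal (exp (θ * x)) ∂(Measure.dirac 0) ≤ _
    rw [lintegral_dirac' _ (measurable_expfun θ)]
    simp only [mul_zero, exp_zero, ENNReal.ofReal_one]
    exact ENNReal.one_le_ofReal.2 hC1
  | succ n ih =>
    show ∫⁻ x, ENNReal.ofReal (exp (θ * x)) ∂(Measure.map T ((sig μ n).prod μ)) ≤ _
    have hmeas : AEMeasurable (fun p : ℝ × ℝ => ENNReal.ofReal (exp (θ * T p)))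
        ((sig μ n).prod μ) := ((measurable_expfun θ).comp measurable_T).aemeasurable
    rw [lintegral_map (measurable_expfun θ) measurable_T, lintegral_prod _ hmeas]
    have hinner : ∀ w : ℝ, ∫⁻ a, ENNReal.ofReal (exp (θ * T (w, a))) ∂μ
        = ENNReal.ofReal (exp (θ * max (w - 1) 0)) * ENNReal.ofReal Fθ := by
      intro w
      have hpt : ∀ a : ℝ, ENNReal.ofReal (exp (θ * T (w, a)))
          = ENNReal.ofReal (exp (θ * max (w - 1) 0)) * ENNReal.ofReal (exp (θ * a)) := by
        intro a
        rw [← ENNReal.ofReal_mul (by positivity), ← exp_add]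
        congr 1
        rw [exp_eq_exp]
        show θ * (max (w - 1) 0 + a) = θ * max (w - 1) 0 + θ * a
        ring
      simp_rw [hpt]
      rw [lintegral_const_mul _ (measurable_expfun θ), ← hF]
      rfl
    simp_rw [hinner]
    calc ∫⁻ w, ENNReal.ofReal (exp (θ * max (w - 1) 0)) * ENNReal.ofReal Fθ ∂(sig μ n)
        ≤ ∫⁻ w, (1 + ENNReal.ofReal (exp (-θ)) * ENNReal.ofReal (exp (θ * w)))
            * ENNReal.ofReal Fθ ∂(sig μ n) := by
          apply lintegral_mono
          intro w
          show ENNReal.ofReal (exp (θ * max (w - 1) 0)) * ENNReal.ofReal Fθ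
            ≤ (1 + ENNReal.ofReal (exp (-θ)) * ENNReal.ofReal (exp (θ * w)))
              * ENNReal.ofReal Fθ
          gcongr
          rw [← ENNReal.ofReal_mul (by positivity), ← exp_add]
          rw [show (1 : ℝ≥0∞) = ENNReal.ofReal 1 from ENNReal.ofReal_one.symm,
            ← ENNReal.ofReal_add zero_le_one (by positivity)]
          apply ENNReal.ofReal_le_ofReal
          rcases le_or_gt 1 w with h | h
          · rw [max_eq_left (by linarith)]
            have h2 : θ * (w - 1) = -θ + θ * w := by ring
            rw [h2]
            linarith
          · rw [max_eq_right (by linarith)]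
            simp only [mul_zero, exp_zero]
            linarith [exp_pos (-θ + θ * w)]
      _ = (1 + ENNReal.ofReal (exp (-θ)) * ∫⁻ w, ENNReal.ofReal (exp (θ * w)) ∂(sig μ n))
            * ENNReal.ofReal Fθ := by
          rw [lintegral_mul_const' _ _ ENNReal.ofReal_ne_top,
            lintegral_add_left measurable_const,
            lintegral_const_mul _ (measurable_expfun θ)]
          simp
      _ ≤ (1 + ENNReal.ofReal (exp (-θ)) * ENNReal.ofReal C) * ENNReal.ofReal Fθ := by
          gcongr
      _ = ENNReal.ofReal ((1 + exp (-θ) * C) * Fθ) := by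
          rw [← ENNReal.ofReal_mul (by positivity),
            show (1 : ℝ≥0∞) = ENNReal.ofReal 1 from ENNReal.ofReal_one.symm,
            ← ENNReal.ofReal_add zero_le_one (by positivity),
            ← ENNReal.ofReal_mul (by positivity)]
      _ = ENNReal.ofReal C := by
          congr 1
          rw [hCdef]
          field_simp
          ring

end MGF

def Freal (μ : Measure ℝ) (θ : ℝ) : ℝ := ∫ a, exp (θ * a) ∂μ

section FREAL
variable {μ}
variable (hnn : μ {x | x < 0} = 0)

include hnn in
lemma ae_nn : ∀ᵐ a ∂μ, 0 ≤ a := by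
  rw [ae_iff]; simpa [not_le] using hnn

include hnn in
lemma F_int {θ' θ : ℝ} (hi : Integrable (fun a => exp (θ' * a)) μ)
    (h0 : 0 ≤ θ) (hθ : θ ≤ θ') : Integrable (fun a => exp (θ * a)) μ := by
  refine Integrable.mono' (g := fun a => 1 + exp (θ' * a)) ((integrable_const 1).add hi)
    ((measurable_id.const_mul θ).exp.aestronglyMeasurable) ?_
  filter_upwards [ae_nn hnn] with a ha
  rw [norm_of_nonneg (exp_pos _).le]
  have h1 : θ * a ≤ θ' * a := mul_le_mul_of_nonneg_right hθ ha
  have h2 : exp (θ * a) ≤ exp (θ' * a) := exp_le_exp.2 h1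
  linarith

include hnn in
lemma F_ge_one {θ : ℝ} (h0 : 0 ≤ θ) (hi : Integrable (fun a => exp (θ * a)) μ) :
    1 ≤ Freal μ θ := by
  have h1 : (1:ℝ) = ∫ _, (1:ℝ) ∂μ := by simp
  rw [Freal, h1]
  apply integral_mono_ae (integrable_const 1) hi
  filter_upwards [ae_nn hnn] with a ha
  have h2 : (0:ℝ) ≤ θ * a := mul_nonneg h0 ha
  linarith [add_one_le_exp (θ * a)]

lemma Lmgf_eq {θ : ℝ} (hi : Integrable (fun a => exp (θ * a)) μ) :
    Lmgf μ θ = ENNReal.ofReal (Freal μ θ) :=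
  (ofReal_integral_eq_lintegral_ofReal hi (ae_of_all _ fun a => (exp_pos _).le)).symm

lemma exp_sq_bound {y : ℝ} (hy : 0 ≤ y) : exp y ≤ 1 + y + y^2 * exp y := by
  have h5 := add_one_le_exp (-y)
  have hinv : exp (-y) * exp y = 1 := by rw [← exp_add]; simp
  have h6 : (1 - y) * exp y ≤ 1 := by nlinarith [exp_pos y]
  have h7 : exp y ≤ 1 + y * exp y := by nlinarith
  have h8 : y * (exp y - 1) ≤ y * (y * exp y) := by
    apply mul_le_mul_of_nonneg_left _ hy
    nlinarith
  nlinarith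

include hnn in
lemma exists_theta1 (hmgf : ∃ ε > 0, ∀ θ : ℝ, |θ| < ε → Integrable (fun x => exp (θ * x)) μ)
    (hmean : ∫ x, x ∂μ < 1) :
    ∃ θ₁ δ : ℝ, 0 < θ₁ ∧ 0 < δ ∧ Integrable (fun a => exp (θ₁ * a)) μ ∧
      exp (θ₁ * δ) * (exp (-θ₁) * Freal μ θ₁) < 1 := by
  obtain ⟨ε, hε, hint⟩ := hmgf
  set s : ℝ := ε/4 with hs
  have hs0 : 0 < s := by positivity
  -- cube bound
  have hcube : ∀ x : ℝ, 0 ≤ x → x^3 ≤ 27/s^3 * exp (s*x) := by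
    intro x hx
    have h1 : s*x/3 ≤ exp (s*x/3) := by linarith [add_one_le_exp (s*x/3)]
    have h2 : (s*x/3)^3 ≤ exp (s*x/3)^3 :=
      pow_le_pow_left₀ (by positivity) h1 3
    have h3 : exp (s*x/3)^(3:ℕ) = exp (s*x) := by
      rw [← Real.exp_nat_mul]
      congr 1
      push_cast
      ring
    have h4 : x^3 = 27/s^3 * (s*x/3)^3 := by
      field_simp
      ring
    rw [h4, ← h3]
    have : (0:ℝ) ≤ 27/s^3 := by positivity
    exact mul_le_mul_of_nonneg_left h2 this
  set K : ℝ := 1 + 27/s^3 with hKdef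
  have hK0 : 0 < K := by positivity
  have hKsq : ∀ x : ℝ, 0 ≤ x → x^2 ≤ K * exp (s*x) := by
    intro x hx
    have h1 : x^2 ≤ 1 + x^3 := by
      rcases le_or_gt x 1 with h | h
      · nlinarith
      · nlinarith
    have h2 := hcube x hx
    have h3 : (1:ℝ) ≤ exp (s*x) := by
      have : (0:ℝ) ≤ s*x := by positivity
      linarith [add_one_le_exp (s*x)]
    rw [hKdef]
    nlinarith
  -- integrable identity function
  have hid : Integrable (fun a : ℝ => a) μ := by
    have hi1 : Integrable (fun a => exp ((ε/2) * a)) μ := by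
      apply hint
      rw [abs_of_pos (by positivity)]
      linarith
    have hi2 : Integrable (fun a => exp ((-(ε/2)) * a)) μ := by
      apply hint
      rw [abs_of_neg (by linarith)]
      linarith
    refine Integrable.mono' (((hi1.add hi2)).const_mul (2/ε)) measurable_id.aestronglyMeasurable
      (ae_of_all _ fun a => ?_)
    rw [Real.norm_eq_abs]
    have h1 : (ε/2) * |a| ≤ exp ((ε/2) * |a|) := by
      linarith [add_one_le_exp ((ε/2) * |a|)]
    have h2 : exp ((ε/2) * |a|) ≤ exp ((ε/2) * a) + exp ((-(ε/2)) * a) := by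
      rcases le_or_gt 0 a with h | h
      · rw [abs_of_nonneg h]
        linarith [exp_pos ((-(ε/2)) * a)]
      · rw [abs_of_neg h]
        have : (ε/2) * -a = (-(ε/2)) * a := by ring
        rw [this]
        linarith [exp_pos ((ε/2) * a)]
    have h3 : |a| ≤ (2/ε) * exp ((ε/2) * |a|) := by
      rw [div_mul_eq_mul_div, le_div_iff₀ hε]
      linarith
    calc |a| ≤ (2/ε) * exp ((ε/2) * |a|) := h3
      _ ≤ (2/ε) * (exp ((ε/2) * a) + exp ((-(ε/2)) * a)) := by
          apply mul_le_mul_of_nonneg_left h2 (by positivity)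
  set m : ℝ := ∫ a, a ∂μ with hmdef
  have hm0 : 0 ≤ m := integral_nonneg_of_ae (ae_nn hnn)
  have hm1 : m < 1 := hmean
  set δ : ℝ := (1 - m)/2 with hδdef
  have hδ0 : 0 < δ := by rw [hδdef]; linarith
  have hc : Integrable (fun a => exp ((3*ε/4) * a)) μ := by
    apply hint
    rw [abs_of_pos (by positivity)]
    linarith
  set KK : ℝ := K * ∫ a, exp ((3*ε/4) * a) ∂μ with hKKdef
  have hIc0 : 0 ≤ ∫ a, exp ((3*ε/4) * a) ∂μ :=
    integral_nonneg fun a => (exp_pos _).le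
  have hKK0 : 0 ≤ KK := mul_nonneg hK0.le hIc0
  set θ₁ : ℝ := min (ε/8) (δ / (KK + 1)) with hθ₁def
  have hθ₁0 : 0 < θ₁ := lt_min (by positivity) (by positivity)
  have hθ₁ε : θ₁ < ε := lt_of_le_of_lt (min_le_left _ _) (by linarith)
  have hiθ₁ : Integrable (fun a => exp (θ₁ * a)) μ := by
    apply hint
    rw [abs_of_pos hθ₁0]
    exact hθ₁ε
  -- pointwise bound
  have hpt : ∀ᵐ a ∂μ, exp (θ₁ * a) ≤ 1 + θ₁ * a + θ₁^2 * (K * exp ((3*ε/4) * a)) := by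
    filter_upwards [ae_nn hnn] with a ha
    have hy : 0 ≤ θ₁ * a := mul_nonneg hθ₁0.le ha
    have h1 := exp_sq_bound hy
    have h2 : (θ₁ * a)^2 * exp (θ₁ * a) ≤ θ₁^2 * (K * exp ((3*ε/4) * a)) := by
      have h3 : a^2 ≤ K * exp (s*a) := hKsq a ha
      have h4 : exp (s*a) * exp (θ₁ * a) = exp (s*a + θ₁*a) := (exp_add _ _).symm
      have h5 : exp (s*a + θ₁*a) ≤ exp ((3*ε/4) * a) := by
        apply exp_le_exp.2
        have hθs : θ₁ ≤ ε/8 := min_le_left _ _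
        rw [hs] at *
        nlinarith
      calc (θ₁ * a)^2 * exp (θ₁ * a) = θ₁^2 * (a^2 * exp (θ₁ * a)) := by ring
        _ ≤ θ₁^2 * ((K * exp (s*a)) * exp (θ₁ * a)) := by
            apply mul_le_mul_of_nonneg_left _ (by positivity)
            exact mul_le_mul_of_nonneg_right h3 (exp_pos _).le
        _ = θ₁^2 * (K * (exp (s*a) * exp (θ₁*a))) := by ring
        _ ≤ θ₁^2 * (K * exp ((3*ε/4) * a)) := by
            rw [h4]
            apply mul_le_mul_of_nonneg_left _ (by positivity)
            exact mul_le_mul_of_nonneg_left h5 hK0.le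
    linarith
  -- integrate
  have hFbound : Freal μ θ₁ ≤ 1 + θ₁ * m + θ₁^2 * KK := by
    have hI1 : Integrable (fun a : ℝ => 1 + θ₁ * a) μ := by
      exact (integrable_const 1).add (hid.const_mul θ₁)
    have hI2 : Integrable (fun a : ℝ => θ₁^2 * (K * exp ((3*ε/4) * a))) μ :=
      (hc.const_mul K).const_mul (θ₁^2)
    have hrhs : Integrable (fun a => 1 + θ₁ * a + θ₁^2 * (K * exp ((3*ε/4) * a))) μ := by
      exact hI1.add hI2
    have hmono := integral_mono_ae hiθ₁ hrhs hpt
    have e1 : ∫ a, (1 + θ₁ * a + θ₁^2 * (K * exp ((3*ε/4) * a))) ∂μ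
        = (∫ a, (1 + θ₁ * a) ∂μ) + ∫ a, θ₁^2 * (K * exp ((3*ε/4) * a)) ∂μ :=
      integral_add hI1 hI2
    have e2 : ∫ a, (1 + θ₁ * a) ∂μ = 1 + θ₁ * m := by
      have e2a : ∫ a, (1 + θ₁ * a) ∂μ = (∫ _a, (1:ℝ) ∂μ) + ∫ a, θ₁ * a ∂μ :=
        integral_add (integrable_const 1) (hid.const_mul θ₁)
      rw [e2a, integral_const, integral_const_mul]
      simp [hmdef]
    have e3 : ∫ a, θ₁^2 * (K * exp ((3*ε/4) * a)) ∂μ = θ₁^2 * KK := by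
      rw [integral_const_mul, integral_const_mul, hKKdef]
    rw [Freal]
    calc ∫ a, exp (θ₁ * a) ∂μ ≤ _ := hmono
      _ = 1 + θ₁ * m + θ₁^2 * KK := by rw [e1, e2, e3]
  -- conclude
  refine ⟨θ₁, δ, hθ₁0, hδ0, hiθ₁, ?_⟩
  have hKKlt : θ₁ * KK < δ := by
    have h1 : θ₁ ≤ δ / (KK + 1) := min_le_right _ _
    have h2 : θ₁ * (KK + 1) ≤ δ := by
      rw [← le_div_iff₀ (by positivity)]
      exact h1
    nlinarith
  have h9 : Freal μ θ₁ < exp (θ₁ * (1 - δ)) := by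
    have h1 : 1 + θ₁ * (1 - δ) ≤ exp (θ₁ * (1 - δ)) := by
      linarith [add_one_le_exp (θ₁ * (1 - δ))]
    have h2 : m + δ = 1 - δ := by rw [hδdef]; ring
    have h3 : θ₁^2 * KK < θ₁ * δ := by nlinarith
    calc Freal μ θ₁ ≤ 1 + θ₁ * m + θ₁^2 * KK := hFbound
      _ < 1 + θ₁ * m + θ₁ * δ := by linarith
      _ = 1 + θ₁ * (m + δ) := by ring
      _ = 1 + θ₁ * (1 - δ) := by rw [h2]
      _ ≤ exp (θ₁ * (1 - δ)) := h1
  have hpos : 0 < exp (θ₁ * δ) * exp (-θ₁) := by positivity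
  calc exp (θ₁ * δ) * (exp (-θ₁) * Freal μ θ₁)
      = (exp (θ₁ * δ) * exp (-θ₁)) * Freal μ θ₁ := by ring
    _ < (exp (θ₁ * δ) * exp (-θ₁)) * exp (θ₁ * (1 - δ)) :=
        mul_lt_mul_of_pos_left h9 hpos
    _ = exp (θ₁ * δ + -θ₁ + θ₁ * (1 - δ)) := by rw [← exp_add, ← exp_add]
    _ = 1 := by
        rw [show θ₁ * δ + -θ₁ + θ₁ * (1 - δ) = 0 by ring, exp_zero]

end FREAL

section GOOD
variable {μ}
variable (hnn : μ {x | x < 0} = 0)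

include hnn in
lemma exists_good {θstar : ℝ} (hθpos : 0 < θstar)
    (hInt : Integrable (fun x => exp (θstar * x)) μ)
    (hFstar : Freal μ θstar = exp θstar)
    (hF0 : Freal μ (θstar/2) < exp (θstar/2))
    {ε : ℝ} (hε : 0 < ε) :
    ∃ (L₀ : ℝ) (n₀ : ℕ), 1 ≤ L₀ ∧
      ENNReal.ofReal (exp (-((θstar + ε) * L₀))) < tau μ n₀ (Ici L₀) := by
  by_contra hcon
  push_neg at hcon
  set θ' : ℝ := θstar + ε/2 with hθ'def
  have hθ'0 : 0 < θ' := by positivity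
  set r : ℝ≥0∞ := ENNReal.ofReal (exp (θ' - (θstar + ε))) with hrdef
  have hr1 : r < 1 := by
    rw [hrdef]
    exact ENNReal.ofReal_lt_one.2 (exp_lt_one_iff.2 (by rw [hθ'def]; linarith))
  set C' : ℝ≥0∞ := ENNReal.ofReal (exp θ') +
      ENNReal.ofReal (exp (2*θ' - (θstar + ε))) * (1 - r)⁻¹ with hC'def
  have hC'top : C' ≠ ⊤ := by
    rw [hC'def]
    apply ENNReal.add_ne_top.2
    refine ⟨ENNReal.ofReal_ne_top, ENNReal.mul_ne_top ENNReal.ofReal_ne_top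
      (ENNReal.inv_ne_top.2 fun h => absurd (tsub_eq_zero_iff_le.1 h) (not_le.2 hr1))⟩
  -- pointwise shell bound
  have hshell : ∀ x : ℝ, ENNReal.ofReal (exp (θ' * x)) ≤
      ENNReal.ofReal (exp θ') + ∑' k : ℕ, (Ici ((k:ℝ)+1)).indicator
        (fun _ => ENNReal.ofReal (exp (θ' * ((k:ℝ)+2)))) x := by
    intro x
    rcases lt_or_ge x 1 with hx | hx
    · refine le_trans ?_ le_self_add
      apply ENNReal.ofReal_le_ofReal
      apply exp_le_exp.2
      nlinarith [mul_lt_mul_of_pos_left hx hθ'0]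
    · have hx0 : 0 ≤ x - 1 := by linarith
      set k := ⌊x - 1⌋₊ with hkdef
      have hk1 : (k:ℝ) ≤ x - 1 := Nat.floor_le hx0
      have hk2 : x - 1 < k + 1 := Nat.lt_floor_add_one _
      refine le_trans ?_ le_add_self
      refine le_trans ?_ (ENNReal.le_tsum k)
      rw [indicator_of_mem (by simp only [mem_Ici]; linarith)]
      apply ENNReal.ofReal_le_ofReal
      apply exp_le_exp.2
      nlinarith
  -- uniform bound
  have hIn : ∀ n : ℕ, (ENNReal.ofReal (exp (-θ')) * Lmgf μ θ') ^ n ≤ C' := by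
    intro n
    rw [← tau_lintegral μ θ' n]
    have hterm : ∀ k : ℕ, ENNReal.ofReal (exp (θ' * ((k:ℝ)+2)))
        * ENNReal.ofReal (exp (-((θstar + ε) * ((k:ℝ)+1))))
        = ENNReal.ofReal (exp (2*θ' - (θstar + ε))) * r ^ k := by
      intro k
      rw [hrdef, ← ENNReal.ofReal_pow (exp_nonneg _), ← ENNReal.ofReal_mul (exp_nonneg _),
        ← ENNReal.ofReal_mul (exp_nonneg _), ← Real.exp_nat_mul, ← exp_add, ← exp_add]
      congr 1
      push_cast
      ring
    calc ∫⁻ x, ENNReal.ofReal (exp (θ' * x)) ∂(tau μ n)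
        ≤ ∫⁻ x, (ENNReal.ofReal (exp θ') + ∑' k : ℕ, (Ici ((k:ℝ)+1)).indicator
            (fun _ => ENNReal.ofReal (exp (θ' * ((k:ℝ)+2)))) x) ∂(tau μ n) :=
          lintegral_mono hshell
      _ = ENNReal.ofReal (exp θ') + ∑' k : ℕ, ENNReal.ofReal (exp (θ' * ((k:ℝ)+2)))
            * tau μ n (Ici ((k:ℝ)+1)) := by
          rw [lintegral_add_left measurable_const, lintegral_const]
          simp only [measure_univ, mul_one]
          congr 1
          rw [lintegral_tsum (fun k =>
            (measurable_const.indicator measurableSet_Ici).aemeasurable)]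
          apply tsum_congr
          intro k
          rw [lintegral_indicator measurableSet_Ici, setLIntegral_const]
      _ ≤ ENNReal.ofReal (exp θ') + ∑' k : ℕ, ENNReal.ofReal (exp (θ' * ((k:ℝ)+2)))
            * ENNReal.ofReal (exp (-((θstar + ε) * ((k:ℝ)+1)))) := by
          gcongr with k
          exact hcon _ n (by linarith [Nat.cast_nonneg (α := ℝ) k])
      _ = ENNReal.ofReal (exp θ') + ∑' k : ℕ,
            ENNReal.ofReal (exp (2*θ' - (θstar + ε))) * r ^ k := by
          congr 1
          exact tsum_congr hterm
      _ = C' := by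
          rw [ENNReal.tsum_mul_left, ENNReal.tsum_geometric, hC'def]
  -- base ≤ 1
  set xB : ℝ≥0∞ := ENNReal.ofReal (exp (-θ')) * Lmgf μ θ' with hxBdef
  have hxB : xB ≤ 1 := by
    by_contra hx
    push_neg at hx
    rcases eq_or_ne xB ⊤ with htop | htop
    · have h1 := hIn 1
      rw [pow_one, htop] at h1
      exact hC'top (top_le_iff.1 h1)
    · have hb1 : 1 < xB.toReal := by
        have := (ENNReal.toReal_lt_toReal (by simp) htop).2 hx
        simpa using this
      obtain ⟨n, hn⟩ := pow_unbounded_of_one_lt (C'.toReal) hb1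
      have h1 : xB ^ n ≤ C' := hIn n
      rw [← ENNReal.ofReal_toReal htop, ← ENNReal.ofReal_pow ENNReal.toReal_nonneg] at h1
      have h2 := (ENNReal.ofReal_le_iff_le_toReal hC'top).1 h1
      linarith
  have hLθ' : Lmgf μ θ' ≤ ENNReal.ofReal (exp θ') := by
    have h1 : Lmgf μ θ' = ENNReal.ofReal (exp θ') * xB := by
      rw [hxBdef, ← mul_assoc, ← ENNReal.ofReal_mul (exp_pos _).le, ← exp_add]
      simp
    rw [h1]
    calc ENNReal.ofReal (exp θ') * xB ≤ ENNReal.ofReal (exp θ') * 1 := by gcongr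
      _ = _ := mul_one _
  -- Hölder
  set θ₀ : ℝ := θstar/2 with hθ₀def
  have hθ₀0 : 0 < θ₀ := by positivity
  set t : ℝ := ε / (θstar + ε) with htdef
  have ht0 : 0 < t := by positivity
  have ht1 : t < 1 := by
    rw [htdef, div_lt_one (by positivity)]
    linarith
  have hth : t * θ₀ + (1 - t) * θ' = θstar := by
    have hne : θstar + ε ≠ 0 := by positivity
    rw [htdef, hθ₀def, hθ'def]
    field_simp
    ring
  have hHold := ENNReal.lintegral_mul_norm_pow_le (μ := μ) (p := t) (q := 1 - t)
    (f := fun a => ENNReal.ofReal (exp (θ₀ * a)))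
    (g := fun a => ENNReal.ofReal (exp (θ' * a)))
    ((measurable_expfun θ₀).aemeasurable) ((measurable_expfun θ').aemeasurable)
    ht0.le (by linarith) (by ring)
  have hLHS : ∫⁻ a, (ENNReal.ofReal (exp (θ₀ * a)))^t * (ENNReal.ofReal (exp (θ' * a)))^(1-t) ∂μ
      = Lmgf μ θstar := by
    apply lintegral_congr
    intro a
    rw [ENNReal.ofReal_rpow_of_pos (exp_pos _), ENNReal.ofReal_rpow_of_pos (exp_pos _),
      ← Real.exp_mul, ← Real.exp_mul, ← ENNReal.ofReal_mul (exp_nonneg _), ← exp_add]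
    congr 2
    have : θ₀ * a * t + θ' * a * (1 - t) = (t * θ₀ + (1 - t) * θ') * a := by ring
    rw [this, hth]
  have hIθ0 : Integrable (fun a => exp (θ₀ * a)) μ :=
    F_int hnn hInt hθ₀0.le (by rw [hθ₀def]; linarith)
  have hF0ge : 1 ≤ Freal μ θ₀ := F_ge_one hnn hθ₀0.le hIθ0
  have hchain : ENNReal.ofReal (exp θstar)
      ≤ ENNReal.ofReal ((Freal μ θ₀)^t * (exp θ')^(1-t)) := by
    calc ENNReal.ofReal (exp θstar) = Lmgf μ θstar := by rw [Lmgf_eq hInt, hFstar]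
      _ = ∫⁻ a, (ENNReal.ofReal (exp (θ₀ * a)))^t
            * (ENNReal.ofReal (exp (θ' * a)))^(1-t) ∂μ := hLHS.symm
      _ ≤ (Lmgf μ θ₀)^t * (Lmgf μ θ')^(1-t) := hHold
      _ ≤ (ENNReal.ofReal (Freal μ θ₀))^t * (ENNReal.ofReal (exp θ'))^(1-t) := by
          rw [Lmgf_eq hIθ0]
          gcongr
      _ = ENNReal.ofReal ((Freal μ θ₀)^t * (exp θ')^(1-t)) := by
          rw [ENNReal.ofReal_rpow_of_pos (lt_of_lt_of_le one_pos hF0ge),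
            ENNReal.ofReal_rpow_of_pos (exp_pos _),
            ← ENNReal.ofReal_mul (by positivity)]
  have hreal : exp θstar ≤ (Freal μ θ₀)^t * (exp θ')^(1-t) :=
    (ENNReal.ofReal_le_ofReal_iff (by positivity)).1 hchain
  have hstrict : (Freal μ θ₀)^t * (exp θ')^(1-t) < (exp θ₀)^t * (exp θ')^(1-t) := by
    apply mul_lt_mul_of_pos_right _ (by positivity)
    exact Real.rpow_lt_rpow (by linarith) (by rw [hθ₀def]; exact hF0) ht0
  have hfinal : (exp θ₀)^t * (exp θ')^(1-t) = exp θstar := by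
    rw [← Real.exp_mul, ← Real.exp_mul, ← exp_add]
    congr 1
    rw [show θ₀*t + θ'*(1-t) = t*θ₀ + (1-t)*θ' by ring, hth]
  rw [hfinal] at hstrict
  linarith

end GOOD

section UPPER
variable {μ ν}

lemma tau_pow (n₀ : ℕ) {L₀ : ℝ} (hL₀ : 0 ≤ L₀) :
    ∀ k : ℕ, (tau μ n₀ (Ici L₀)) ^ k ≤ tau μ (k * n₀) (Ici ((k : ℝ) * L₀)) := by
  intro k
  induction k with
  | zero =>
    rw [pow_zero, Nat.zero_mul]
    push_cast
    rw [zero_mul, tau_zero_apply]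
    norm_num
  | succ k ih =>
    rw [pow_succ]
    calc (tau μ n₀ (Ici L₀))^k * tau μ n₀ (Ici L₀)
        ≤ tau μ (k*n₀) (Ici ((k:ℝ)*L₀)) * tau μ n₀ (Ici L₀) := mul_le_mul_left ih _
      _ ≤ tau μ (k*n₀ + n₀) (Ici ((k:ℝ)*L₀ + L₀)) :=
          tau_superadd μ n₀ (k*n₀) ((k:ℝ)*L₀) L₀
      _ = tau μ ((k+1)*n₀) (Ici (((k+1:ℕ):ℝ)*L₀)) := by
          congr 1
          · ring
          · congr 1
            push_cast
            ring

lemma upper_bound (hnn : μ {x | x < 0} = 0) (hstat : ν = Measure.map T (ν.prod μ))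
    (hmgf : ∃ ε > 0, ∀ θ : ℝ, |θ| < ε → Integrable (fun x => exp (θ * x)) μ)
    (hmean : ∫ x, x ∂μ < 1)
    {θ : ℝ} (hθ0 : 0 < θ) (hi : Integrable (fun a => exp (θ * a)) μ)
    (hρ : exp (-θ) * Freal μ θ < 1) :
    ∀ L : ℝ, ν (Ici L) ≤
      ENNReal.ofReal ((Freal μ θ / (1 - exp (-θ) * Freal μ θ)) * exp (-(θ * L))) := by
  obtain ⟨θ₁, δ, hθ₁0, hδ0, hiθ₁, hρ₁lt⟩ := exists_theta1 hnn hmgf hmean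
  intro L
  set Cθ : ℝ := Freal μ θ / (1 - exp (-θ) * Freal μ θ) with hCθdef
  have hsig : ∀ n, sig μ n (Ici L) ≤ ENNReal.ofReal (Cθ * exp (-(θ * L))) := by
    intro n
    calc sig μ n (Ici L)
        ≤ ENNReal.ofReal (exp (-(θ * L))) * ∫⁻ x, ENNReal.ofReal (exp (θ * x)) ∂(sig μ n) :=
          chernoff _ hθ0 L
      _ ≤ ENNReal.ofReal (exp (-(θ * L))) * ENNReal.ofReal Cθ := by
          gcongr
          exact sig_lintegral_le μ hθ0 (Lmgf_eq hi) (F_ge_one hnn hθ0.le hi) hρ n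
      _ = ENNReal.ofReal (Cθ * exp (-(θ * L))) := by
          rw [← ENNReal.ofReal_mul (exp_nonneg _), mul_comm]
  set ρ₁ : ℝ := exp (θ₁ * δ) * (exp (-θ₁) * Freal μ θ₁) with hρ₁def
  have hF₁0 : 0 ≤ Freal μ θ₁ := le_trans zero_le_one (F_ge_one hnn hθ₁0.le hiθ₁)
  have hρ₁0 : 0 ≤ ρ₁ := by
    rw [hρ₁def]
    positivity
  have htau : ∀ n : ℕ, tau μ n (Ici (L - δ * n))
      ≤ ENNReal.ofReal (exp (-(θ₁ * L)) * ρ₁ ^ n) := by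
    intro n
    calc tau μ n (Ici (L - δ * n))
        ≤ ENNReal.ofReal (exp (-(θ₁ * (L - δ * n))))
          * ∫⁻ x, ENNReal.ofReal (exp (θ₁ * x)) ∂(tau μ n) := chernoff _ hθ₁0 _
      _ = ENNReal.ofReal (exp (-(θ₁ * (L - δ * n))))
          * (ENNReal.ofReal (exp (-θ₁)) * Lmgf μ θ₁) ^ n := by rw [tau_lintegral]
      _ = ENNReal.ofReal (exp (-(θ₁ * L)) * ρ₁ ^ n) := by
          rw [Lmgf_eq hiθ₁, ← ENNReal.ofReal_mul (exp_nonneg _),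
            ← ENNReal.ofReal_pow (mul_nonneg (exp_nonneg _) hF₁0),
            ← ENNReal.ofReal_mul (exp_nonneg _)]
          congr 1
          have he : exp (-(θ₁ * (L - δ * n))) = exp (-(θ₁ * L)) * exp (θ₁ * δ) ^ n := by
            rw [← Real.exp_nat_mul, ← exp_add]
            congr 1
            push_cast
            ring
          rw [he, hρ₁def, mul_pow]
          ring
  have hcomb : ∀ n : ℕ, ν (Ici L) ≤
      ν (Ici (δ * n)) + ENNReal.ofReal (exp (-(θ₁ * L)) * ρ₁ ^ n)
        + ENNReal.ofReal (Cθ * exp (-(θ * L))) := by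
    intro n
    calc ν (Ici L) ≤ kap μ ν n {p : ℝ × ℝ | L ≤ max p.1 p.2} := nu_le_kap hnn hstat n L
      _ ≤ Measure.map Prod.fst (kap μ ν n) (Ici L) + sig μ n (Ici L) := kap_union μ n L
      _ ≤ (ν (Ici (δ * n)) + tau μ n (Ici (L - δ * n))) + sig μ n (Ici L) := by
          gcongr
          exact lam_bound μ hstat n L (δ * n)
      _ ≤ (ν (Ici (δ * n)) + ENNReal.ofReal (exp (-(θ₁ * L)) * ρ₁ ^ n))
            + ENNReal.ofReal (Cθ * exp (-(θ * L))) := by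
          gcongr
          · exact htau n
          · exact hsig n
  have h1 : Tendsto (fun n : ℕ => ν (Ici (δ * n))) atTop (nhds 0) := by
    have hemp : ⋂ n : ℕ, Ici (δ * n) = (∅ : Set ℝ) := by
      ext x
      simp only [mem_iInter, mem_Ici, mem_empty_iff_false, iff_false, not_forall, not_le]
      obtain ⟨n, hn⟩ := exists_nat_gt (x / δ)
      exact ⟨n, by rwa [div_lt_iff₀ hδ0, mul_comm] at hn⟩
    have := tendsto_measure_iInter_atTop (μ := ν)
      (fun n => measurableSet_Ici.nullMeasurableSet)
      (fun m n hmn => Ici_subset_Ici.2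
        (mul_le_mul_of_nonneg_left (Nat.cast_le.2 hmn) hδ0.le))
      ⟨0, measure_ne_top _ _⟩
    rwa [hemp, measure_empty] at this
  have h2 : Tendsto (fun n : ℕ => ENNReal.ofReal (exp (-(θ₁ * L)) * ρ₁ ^ n)) atTop (nhds 0) := by
    have hr : Tendsto (fun n : ℕ => exp (-(θ₁ * L)) * ρ₁ ^ n) atTop (nhds 0) := by
      simpa using (tendsto_pow_atTop_nhds_zero_of_lt_one hρ₁0 hρ₁lt).const_mul (exp (-(θ₁ * L)))
    have h0 : (0 : ℝ≥0∞) = ENNReal.ofReal 0 := by simp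
    rw [h0]
    exact (ENNReal.continuous_ofReal.tendsto 0).comp hr
  have h3 : Tendsto (fun n : ℕ => ν (Ici (δ * n)) + ENNReal.ofReal (exp (-(θ₁ * L)) * ρ₁ ^ n)
      + ENNReal.ofReal (Cθ * exp (-(θ * L)))) atTop
      (nhds (0 + 0 + ENNReal.ofReal (Cθ * exp (-(θ * L))))) :=
    (h1.add h2).add tendsto_const_nhds
  have h4 := ge_of_tendsto' h3 hcomb
  simpa using h4

end UPPER
end Stmt16Aux

end

open Stmt16Aux

theorem stmt16 (μa ν : Measure ℝ) [IsProbabilityMeasure μa] [IsProbabilityMeasure ν]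
    (hnn : μa {x | x < 0} = 0)
    (hmean : ∫ x, x ∂μa < 1)
    (hmgf : ∃ ε > 0, ∀ θ : ℝ, |θ| < ε → Integrable (fun x => Real.exp (θ * x)) μa)
    (hstat : ν = Measure.map (fun p : ℝ × ℝ => max (p.1 - 1) 0 + p.2) (ν.prod μa))
    (θstar : ℝ) (hθpos : 0 < θstar)
    (hInt : Integrable (fun x => Real.exp (θstar * x)) μa)
    (heq : Real.log (∫ x, Real.exp (θstar * x) ∂μa) = θstar)
    (hlt : ∀ θ ∈ Set.Ioo (0 : ℝ) θstar,
      Real.log (∫ x, Real.exp (θ * x) ∂μa) < θ) :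
    Filter.Tendsto (fun Lv : ℝ => (1 / Lv) * Real.log (ν (Set.Ici Lv)).toReal)
      Filter.atTop (nhds (-θstar)) := by
  classical
  have hstat' : ν = Measure.map T (ν.prod μa) := hstat
  -- basic mgf facts
  have hF1 : 1 ≤ Freal μa θstar := F_ge_one hnn hθpos.le hInt
  have hFstar : Freal μa θstar = exp θstar := by
    have h0 : 0 < Freal μa θstar := lt_of_lt_of_le one_pos hF1
    calc Freal μa θstar = exp (log (Freal μa θstar)) := (Real.exp_log h0).symm
      _ = exp θstar := by rw [show log (Freal μa θstar) = θstar from heq]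
  have hFlt : ∀ θ ∈ Ioo (0:ℝ) θstar, Freal μa θ < exp θ := by
    intro θ hθ
    have hi := F_int hnn hInt hθ.1.le hθ.2.le
    have h0 : 0 < Freal μa θ := lt_of_lt_of_le one_pos (F_ge_one hnn hθ.1.le hi)
    calc Freal μa θ = exp (log (Freal μa θ)) := (Real.exp_log h0).symm
      _ < exp θ := exp_lt_exp.2 (hlt θ hθ)
  -- positivity of the tails
  obtain ⟨La, na, hLa1, hPa⟩ := exists_good hnn hθpos hInt hFstar
    (hFlt _ ⟨by positivity, by linarith⟩) one_pos
  have hLa0 : 0 < La := lt_of_lt_of_le one_pos hLa1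
  have hpa0 : 0 < tau μa na (Ici La) := lt_of_le_of_lt zero_le hPa
  have hnu_pos : ∀ L : ℝ, 0 < ν (Ici L) := by
    intro L
    obtain ⟨k, hk⟩ := exists_nat_gt (L / La)
    have hkL : L ≤ (k:ℝ) * La := ((div_lt_iff₀ hLa0).1 hk).le
    calc (0:ℝ≥0∞) < (tau μa na (Ici La))^k := ENNReal.pow_pos hpa0 k
      _ ≤ tau μa (k*na) (Ici ((k:ℝ)*La)) := tau_pow na hLa0.le k
      _ ≤ ν (Ici ((k:ℝ)*La)) := tau_le_nu hnn hstat' _ _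
      _ ≤ ν (Ici L) := measure_mono (Ici_subset_Ici.2 hkL)
  set G : ℝ → ℝ := fun L => (ν (Ici L)).toReal with hGdef
  have hGpos : ∀ L, 0 < G L := fun L => ENNReal.toReal_pos (hnu_pos L).ne' (measure_ne_top _ _)
  show Tendsto (fun L : ℝ => (1 / L) * log (G L)) atTop (nhds (-θstar))
  apply tendsto_order.2
  constructor
  · -- lower bound branch
    intro c hc
    set ε : ℝ := (-c - θstar)/2 with hεdef
    have hε : 0 < ε := by rw [hεdef]; linarith
    obtain ⟨L₀, n₀, hL₀1, hP⟩ := exists_good hnn hθpos hInt hFstar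
      (hFlt _ ⟨by positivity, by linarith⟩) hε
    have hL₀0 : 0 < L₀ := lt_of_lt_of_le one_pos hL₀1
    set p : ℝ := (tau μa n₀ (Ici L₀)).toReal with hpdef
    have hple : exp (-((θstar + ε) * L₀)) ≤ p := by
      have h1 := ENNReal.toReal_mono (measure_ne_top _ _) hP.le
      rwa [ENNReal.toReal_ofReal (exp_nonneg _)] at h1
    have hp0 : 0 < p := lt_of_lt_of_le (exp_pos _) hple
    have hp1 : p ≤ 1 := by
      rw [hpdef]
      exact ENNReal.toReal_le_of_le_ofReal zero_le_one (by simpa using prob_le_one)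
    have hlogp : -((θstar + ε) * L₀) ≤ log p := by
      calc -((θstar + ε) * L₀) = log (exp (-((θstar + ε) * L₀))) := (Real.log_exp _).symm
        _ ≤ log p := Real.log_le_log (exp_pos _) hple
    have hlogp0 : log p ≤ 0 := Real.log_nonpos hp0.le hp1
    filter_upwards [eventually_ge_atTop (max (max L₀ 1) ((-log p)/ε + 1))] with L hL
    have hL0 : 0 < L := lt_of_lt_of_le (by positivity)
      (le_trans (le_trans (le_max_right L₀ 1) (le_max_left _ _)) hL)
    have hLbig : (-log p)/ε < L := by
      have := le_trans (le_max_right _ _) hL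
      linarith
    set k : ℕ := ⌈L / L₀⌉₊ with hkdef
    have hkub : (k:ℝ) ≤ L/L₀ + 1 := (Nat.ceil_lt_add_one (by positivity)).le
    have hkL : L ≤ k * L₀ := by
      have h1 := Nat.le_ceil (L / L₀)
      calc L = (L/L₀) * L₀ := by field_simp
        _ ≤ k * L₀ := mul_le_mul_of_nonneg_right h1 hL₀0.le
    have hGk : p ^ k ≤ G L := by
      have h1 : (tau μa n₀ (Ici L₀))^k ≤ ν (Ici L) :=
        le_trans (le_trans (tau_pow n₀ hL₀0.le k) (tau_le_nu hnn hstat' _ _))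
          (measure_mono (Ici_subset_Ici.2 hkL))
      have h2 : ((tau μa n₀ (Ici L₀))^k).toReal = p^k := by rw [ENNReal.toReal_pow]
      calc p^k = ((tau μa n₀ (Ici L₀))^k).toReal := h2.symm
        _ ≤ G L := ENNReal.toReal_mono (measure_ne_top _ _) h1
    have hlogG : (k:ℝ) * log p ≤ log (G L) := by
      calc (k:ℝ)*log p = log (p^k) := by rw [Real.log_pow]
        _ ≤ log (G L) := Real.log_le_log (pow_pos hp0 k) hGk
    have hstep1 : (1/L) * ((k:ℝ) * log p) ≤ (1/L) * log (G L) :=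
      mul_le_mul_of_nonneg_left hlogG (by positivity)
    have hstep2 : (L/L₀ + 1) * log p ≤ (k:ℝ) * log p :=
      mul_le_mul_of_nonpos_right hkub hlogp0
    have hstep2' : (1/L) * ((L/L₀ + 1) * log p) ≤ (1/L) * ((k:ℝ) * log p) :=
      mul_le_mul_of_nonneg_left hstep2 (by positivity)
    have hstep3 : (1/L) * ((L/L₀+1) * log p) = log p / L₀ + log p / L := by
      field_simp
    have hstep4 : -(θstar+ε) ≤ log p / L₀ := by
      rw [le_div_iff₀ hL₀0]
      linarith
    have hstep5 : -ε < log p / L := by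
      rw [lt_div_iff₀ hL0]
      have h6 : -log p < L * ε := by
        have := mul_lt_mul_of_pos_right hLbig hε
        calc -log p = (-log p)/ε * ε := by field_simp
          _ < L * ε := this
      nlinarith
    have hc2 : c = -(θstar+ε) + -ε := by rw [hεdef]; ring
    linarith
  · -- upper bound branch
    intro c hc
    have hmaxlt : max (-c) 0 < θstar := max_lt (by linarith) hθpos
    have hmax0 : (0:ℝ) ≤ max (-c) 0 := le_max_right _ _
    set θ : ℝ := (max (-c) 0 + θstar)/2 with hθdef
    have hθ0 : 0 < θ := by rw [hθdef]; linarith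
    have hθlt : θ < θstar := by rw [hθdef]; linarith
    have hi := F_int hnn hInt hθ0.le hθlt.le
    have hρ : exp (-θ) * Freal μa θ < 1 := by
      have h1 := hFlt θ ⟨hθ0, hθlt⟩
      have h2 : exp (-θ) * Freal μa θ < exp (-θ) * exp θ :=
        mul_lt_mul_of_pos_left h1 (exp_pos _)
      rwa [← exp_add, neg_add_cancel, exp_zero] at h2
    have hub := upper_bound hnn hstat' hmgf hmean hθ0 hi hρ
    set C : ℝ := Freal μa θ / (1 - exp (-θ) * Freal μa θ) with hCdef
    have hC0 : 0 < C :=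
      div_pos (lt_of_lt_of_le one_pos (F_ge_one hnn hθ0.le hi)) (by linarith)
    have hGb : ∀ L, G L ≤ C * exp (-(θ * L)) := fun L =>
      ENNReal.toReal_le_of_le_ofReal (by positivity) (hub L)
    have hcθ : -θ < c := by
      have h2 : -c ≤ max (-c) 0 := le_max_left _ _
      have h3 : max (-c) 0 < θ := by rw [hθdef]; linarith
      linarith
    filter_upwards [eventually_gt_atTop (max 0 (log C / (c + θ)))] with L hL
    have hL0 : 0 < L := lt_of_le_of_lt (le_max_left _ _) hL
    have h1 : log (G L) ≤ log C + -(θ * L) := by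
      calc log (G L) ≤ log (C * exp (-(θ * L))) := Real.log_le_log (hGpos L) (hGb L)
        _ = log C + -(θ*L) := by rw [Real.log_mul hC0.ne' (exp_pos _).ne', Real.log_exp]
    have h2 : (1/L) * log (G L) ≤ (1/L) * (log C + -(θ*L)) :=
      mul_le_mul_of_nonneg_left h1 (by positivity)
    have h3 : (1/L) * (log C + -(θ*L)) = log C / L - θ := by
      field_simp
      ring
    have h4 : log C / L < c + θ := by
      have hL2 : log C / (c+θ) < L := lt_of_le_of_lt (le_max_right _ _) hL
      have hcθ0 : 0 < c + θ := by linarith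
      rw [div_lt_iff₀ hL0]
      have := (div_lt_iff₀ hcθ0).1 hL2
      nlinarith
    linarith
end

section
/- Let S be the set of n×n 0-1 matrices σ with row sums and column sums at most 1 (partial permutation matrices). Then the convex hull of S equals { x ∈ [0,1]^{n×n} : Σ_m x_{k,m} ≤ 1 for all rows k, and Σ_m x_{m,ℓ} ≤ 1 for all columns ℓ }. -/
open Finset Matrix

/-- Auxiliary: embed a doubly substochastic `n×n` matrix into a `2n×2n` matrix
which will be doubly stochastic. -/
def stmt19Aux (n : ℕ) (x : Fin n → Fin n → ℝ) :
    Matrix (Fin n ⊕ Fin n) (Fin n ⊕ Fin n) ℝ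
  | .inl k, .inl l => x k l
  | .inl k, .inr l => if k = l then 1 - ∑ m, x k m else 0
  | .inr k, .inl l => if l = k then 1 - ∑ m, x m l else 0
  | .inr k, .inr l => x l k

theorem stmt19 (n : ℕ) :
    convexHull ℝ {σ : Fin n → Fin n → ℝ | (∀ k l, σ k l = 0 ∨ σ k l = 1) ∧
        (∀ k, ∑ l, σ k l ≤ 1) ∧ (∀ l, ∑ k, σ k l ≤ 1)}
      = {x : Fin n → Fin n → ℝ | (∀ k l, 0 ≤ x k l ∧ x k l ≤ 1) ∧
        (∀ k, ∑ l, x k l ≤ 1) ∧ (∀ l, ∑ k, x k l ≤ 1)} := by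
  classical
  apply Set.Subset.antisymm
  · apply convexHull_min
    · rintro σ ⟨h01, hr, hc⟩
      exact ⟨fun k l => by rcases h01 k l with h | h <;> simp [h], hr, hc⟩
    · rintro x ⟨hx01, hxr, hxc⟩ y ⟨hy01, hyr, hyc⟩ a b ha hb hab
      have key : ∀ f g : Fin n → ℝ, (∀ i, 0 ≤ f i) → (∀ i, 0 ≤ g i) →
          ∑ i, f i ≤ 1 → ∑ i, g i ≤ 1 → ∑ i, (a * f i + b * g i) ≤ 1 := by
        intro f g hf hg hfs hgs
        have : ∑ i, (a * f i + b * g i) = a * ∑ i, f i + b * ∑ i, g i := by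
          rw [Finset.sum_add_distrib, Finset.mul_sum, Finset.mul_sum]
        rw [this]; nlinarith
      refine ⟨fun k l => ?_, fun k => ?_, fun l => ?_⟩
      · have h1 := hx01 k l; have h2 := hy01 k l
        have : (a • x + b • y) k l = a * x k l + b * y k l := rfl
        rw [this]
        constructor <;> nlinarith [h1.1, h1.2, h2.1, h2.2]
      · have : ∀ l, (a • x + b • y) k l = a * x k l + b * y k l := fun _ => rfl
        simp_rw [this]
        exact key _ _ (fun i => (hx01 k i).1) (fun i => (hy01 k i).1) (hxr k) (hyr k)
      · have : ∀ k, (a • x + b • y) k l = a * x k l + b * y k l := fun _ => rfl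
        simp_rw [this]
        exact key _ _ (fun i => (hx01 i l).1) (fun i => (hy01 i l).1) (hxc l) (hyc l)
  · rintro x ⟨h01, hr, hc⟩
    set M := stmt19Aux n x with hMdef
    have hM : M ∈ doublyStochastic ℝ (Fin n ⊕ Fin n) := by
      rw [mem_doublyStochastic_iff_sum]
      refine ⟨?_, ?_, ?_⟩
      · rintro (k | k) (l | l)
        · exact (h01 k l).1
        · simp only [hMdef, stmt19Aux]
          split
          · linarith [hr k]
          · exact le_refl 0
        · simp only [hMdef, stmt19Aux]
          split
          · linarith [hc l]
          · exact le_refl 0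
        · exact (h01 l k).1
      · rintro (k | k) <;>
        · rw [Fintype.sum_sum_type]
          simp only [hMdef, stmt19Aux]
          simp [Finset.sum_ite_eq, Finset.sum_ite_eq']
      · rintro (l | l) <;>
        · rw [Fintype.sum_sum_type]
          simp only [hMdef, stmt19Aux]
          simp [Finset.sum_ite_eq, Finset.sum_ite_eq']
    have hlin : IsLinearMap ℝ (fun A : Matrix (Fin n ⊕ Fin n) (Fin n ⊕ Fin n) ℝ =>
        (fun k l : Fin n => A (Sum.inl k) (Sum.inl l))) :=
      ⟨fun A B => rfl, fun c A => rfl⟩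
    have hmem : M ∈ convexHull ℝ
        {P | ∃ σ : Equiv.Perm (Fin n ⊕ Fin n), σ.permMatrix ℝ = P} := by
      rw [show {P | ∃ σ : Equiv.Perm (Fin n ⊕ Fin n), σ.permMatrix ℝ = P}
        = {σ.permMatrix ℝ | σ : Equiv.Perm (Fin n ⊕ Fin n)} from rfl,
        ← doublyStochastic_eq_convexHull_permMatrix]
      exact hM
    have hximg : x ∈ (fun A : Matrix (Fin n ⊕ Fin n) (Fin n ⊕ Fin n) ℝ =>
        (fun k l : Fin n => A (Sum.inl k) (Sum.inl l))) ''
        (convexHull ℝ {P | ∃ σ : Equiv.Perm (Fin n ⊕ Fin n), σ.permMatrix ℝ = P}) := by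
      exact ⟨M, hmem, rfl⟩
    rw [hlin.image_convexHull] at hximg
    refine convexHull_mono ?_ hximg
    rintro _ ⟨_, ⟨σ, rfl⟩, rfl⟩
    have hentry : ∀ k l : Fin n, σ.permMatrix ℝ (Sum.inl k) (Sum.inl l)
        = if σ (Sum.inl k) = Sum.inl l then (1:ℝ) else 0 := by
      intro k l
      simp [Equiv.Perm.permMatrix, PEquiv.toMatrix_apply, Equiv.toPEquiv_apply, Option.mem_def]
    refine ⟨fun k l => ?_, fun k => ?_, fun l => ?_⟩
    · simp only [hentry]; split <;> simp
    · simp_rw [hentry]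
      rcases h : σ (Sum.inl k) with m | m
      · simp [Sum.inl.injEq, Finset.sum_ite_eq]
      · simp
    · have hiff : ∀ k : Fin n, (σ (Sum.inl k) = Sum.inl l) ↔
          (Sum.inl k = σ.symm (Sum.inl l)) := fun k => (Equiv.eq_symm_apply σ).symm
      simp_rw [hentry, hiff]
      rcases h : σ.symm (Sum.inl l) with m | m
      · simp [Sum.inl.injEq, Finset.sum_ite_eq']
      · simp
end
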